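/- arXiv:1910.14204 — 7 statements merged into one kernel-verified Lean document; each statement's English description precedes it below -/
import Mathlib

section
/- Let 0 < α < 1, T > 0, and let M₁, M₂ > 0 satisfy M₁/(1+z) ≤ E_{α,1}(−z) ≤ M₂/(1+z) for all real z ≥ 0. Then for every t ∈ [0,T], every s ∈ (0,T], and every square-summable family g = (g_j)_{j ∈ J_d} of reals, ∑_{j ∈ J_d} ( E_{α,1}(−λ_j t^α) · E_{α,1}(−λ_j s^α) / E_{α,1}(−λ_j T^α) )² g_j² ≤ ( M₂² T^α / (M₁ s^α) )² ∑_{j ∈ J_d} g_j². -/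
/-- The Mittag-Leffler function `E_{a,b}(z) = ∑_{i=0}^∞ z^i / Γ(a i + b)`. -/
noncomputable def mittagLeffler (a b z : ℝ) : ℝ :=
  ∑' i : ℕ, z ^ i / Real.Gamma (a * i + b)

/-- `λ_j = j_1² + ⋯ + j_d²` for a multi-index `j` of positive integers. -/
def lamMulti {d : ℕ} (j : Fin d → ℕ+) : ℝ := ∑ i, ((j i : ℕ) : ℝ) ^ 2

private lemma aux_ineq (M₂ sα Tα z : ℝ) (hz : 0 ≤ z) (hst : sα ≤ Tα) :
    M₂ ^ 2 * (1 + z * Tα) * sα ≤ M₂ ^ 2 * Tα * (1 + z * sα) := by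
  nlinarith [mul_le_mul_of_nonneg_left hst (sq_nonneg M₂)]

theorem stmt_2 (d : ℕ) (hd : 1 ≤ d) (α T M₁ M₂ : ℝ)
    (hα0 : 0 < α) (hα1 : α < 1) (hT : 0 < T) (hM₁ : 0 < M₁) (hM₂ : 0 < M₂)
    (hML : ∀ z : ℝ, 0 ≤ z →
      M₁ / (1 + z) ≤ mittagLeffler α 1 (-z) ∧ mittagLeffler α 1 (-z) ≤ M₂ / (1 + z))
    (t : ℝ) (ht : t ∈ Set.Icc 0 T) (s : ℝ) (hs : s ∈ Set.Ioc 0 T)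
    (g : (Fin d → ℕ+) → ℝ) (hg : Summable fun j => (g j) ^ 2) :
    ∑' j : Fin d → ℕ+,
        (mittagLeffler α 1 (-(lamMulti j * t ^ α)) *
          mittagLeffler α 1 (-(lamMulti j * s ^ α)) /
          mittagLeffler α 1 (-(lamMulti j * T ^ α))) ^ 2 * (g j) ^ 2
      ≤ (M₂ ^ 2 * T ^ α / (M₁ * s ^ α)) ^ 2 * ∑' j : Fin d → ℕ+, (g j) ^ 2 := by
  obtain ⟨ht0, htT⟩ := ht
  obtain ⟨hs0, hsT⟩ := hs
  have htα : 0 ≤ t ^ α := Real.rpow_nonneg ht0 α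
  have hsα : 0 < s ^ α := Real.rpow_pos_of_pos hs0 α
  have hTα : 0 < T ^ α := Real.rpow_pos_of_pos hT α
  have hstα : s ^ α ≤ T ^ α := Real.rpow_le_rpow hs0.le hsT hα0.le
  set C := M₂ ^ 2 * T ^ α / (M₁ * s ^ α) with hC
  have hC0 : 0 < C := by positivity
  have key : ∀ j : Fin d → ℕ+,
      (mittagLeffler α 1 (-(lamMulti j * t ^ α)) *
        mittagLeffler α 1 (-(lamMulti j * s ^ α)) /
        mittagLeffler α 1 (-(lamMulti j * T ^ α))) ^ 2 * (g j) ^ 2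
        ≤ C ^ 2 * (g j) ^ 2 := by
    intro j
    have hz : 0 ≤ lamMulti j := by
      unfold lamMulti; positivity
    set z := lamMulti j with hzdef
    obtain ⟨ht1, ht2⟩ := hML (z * t ^ α) (mul_nonneg hz htα)
    obtain ⟨hs1, hs2⟩ := hML (z * s ^ α) (mul_nonneg hz hsα.le)
    obtain ⟨hT1, hT2⟩ := hML (z * T ^ α) (mul_nonneg hz hTα.le)
    have h1t : (0:ℝ) < 1 + z * t ^ α := by nlinarith
    have h1s : (0:ℝ) < 1 + z * s ^ α := by nlinarith
    have h1T : (0:ℝ) < 1 + z * T ^ α := by nlinarith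
    have hET : 0 < mittagLeffler α 1 (-(z * T ^ α)) :=
      lt_of_lt_of_le (div_pos hM₁ h1T) hT1
    have hEt0 : 0 ≤ mittagLeffler α 1 (-(z * t ^ α)) :=
      le_trans (div_pos hM₁ h1t).le ht1
    have hEs0 : 0 ≤ mittagLeffler α 1 (-(z * s ^ α)) :=
      le_trans (div_pos hM₁ h1s).le hs1
    have hratio : mittagLeffler α 1 (-(z * t ^ α)) * mittagLeffler α 1 (-(z * s ^ α)) /
        mittagLeffler α 1 (-(z * T ^ α)) ≤ C := by
      rw [div_le_iff₀ hET]
      have hEt : mittagLeffler α 1 (-(z * t ^ α)) ≤ M₂ := by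
        refine le_trans ht2 ?_
        rw [div_le_iff₀ h1t]; nlinarith [mul_nonneg (mul_nonneg hM₂.le hz) htα]
      have hprod : mittagLeffler α 1 (-(z * t ^ α)) * mittagLeffler α 1 (-(z * s ^ α))
          ≤ M₂ * (M₂ / (1 + z * s ^ α)) :=
        mul_le_mul hEt hs2 hEs0 hM₂.le
      have hmain : M₂ * (M₂ / (1 + z * s ^ α)) ≤ C * (M₁ / (1 + z * T ^ α)) := by
        have e1 : M₂ * (M₂ / (1 + z * s ^ α)) = M₂ ^ 2 / (1 + z * s ^ α) := by ring
        have e2 : C * (M₁ / (1 + z * T ^ α)) = (M₂ ^ 2 * T ^ α / s ^ α) / (1 + z * T ^ α) := by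
          rw [hC]; field_simp
        rw [e1, e2, div_le_div_iff₀ h1s h1T, div_mul_eq_mul_div, le_div_iff₀ hsα]
        exact aux_ineq M₂ (s ^ α) (T ^ α) z hz hstα
      exact le_trans hprod (le_trans hmain (mul_le_mul_of_nonneg_left hT1 hC0.le))
    have hratio0 : 0 ≤ mittagLeffler α 1 (-(z * t ^ α)) * mittagLeffler α 1 (-(z * s ^ α)) /
        mittagLeffler α 1 (-(z * T ^ α)) := by positivity
    have := pow_le_pow_left₀ hratio0 hratio 2
    exact mul_le_mul_of_nonneg_right this (sq_nonneg _)
  have hsum2 : Summable fun j : Fin d → ℕ+ => C ^ 2 * (g j) ^ 2 := hg.mul_left _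
  have hsum1 : Summable fun j : Fin d → ℕ+ =>
      (mittagLeffler α 1 (-(lamMulti j * t ^ α)) *
        mittagLeffler α 1 (-(lamMulti j * s ^ α)) /
        mittagLeffler α 1 (-(lamMulti j * T ^ α))) ^ 2 * (g j) ^ 2 :=
    Summable.of_nonneg_of_le (fun j => by positivity) key hsum2
  calc ∑' j : Fin d → ℕ+,
        (mittagLeffler α 1 (-(lamMulti j * t ^ α)) *
          mittagLeffler α 1 (-(lamMulti j * s ^ α)) /
          mittagLeffler α 1 (-(lamMulti j * T ^ α))) ^ 2 * (g j) ^ 2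
      ≤ ∑' j : Fin d → ℕ+, C ^ 2 * (g j) ^ 2 := Summable.tsum_le_tsum key hsum1 hsum2
    _ = C ^ 2 * ∑' j : Fin d → ℕ+, (g j) ^ 2 := tsum_mul_left
end

section
/- Let n₁, n₂ ≥ 1, 1 ≤ m₁ < n₁, 1 ≤ m₂ < n₂ and j₁, j₂ ≥ 1 be integers, and set C = ∑_{k₁=1}^{n₁} ∑_{k₂=1}^{n₂} ξ_{j₁,j₂}(x_{k₁,k₂}) ξ_{m₁,m₂}(x_{k₁,k₂}). If there exist integers l₁, l₂ ≥ 0 and signs ε₁, ε₂ ∈ {+1, −1} such that j₁ = 2l₁n₁ + ε₁m₁ and j₂ = 2l₂n₂ + ε₂m₂, then C = ε₁ ε₂ (−1)^{l₁+l₂} n₁ n₂ / π²; otherwise C = 0. (Since 1 ≤ m_i < n_i, the representation j_i = 2l_in_i + ε_im_i is unique when it exists.) -/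
open Real

/-- Dirichlet eigenfunction `ξ_{j₁,j₂}(x₁,x₂) = (2/π) sin(j₁x₁) sin(j₂x₂)` on `(0,π)²`. -/
noncomputable def xi2 (j₁ j₂ : ℕ) (x₁ x₂ : ℝ) : ℝ :=
  (2 / π) * Real.sin (j₁ * x₁) * Real.sin (j₂ * x₂)

/-- Midpoint grid point in one coordinate: `(2k−1)π/(2n)`. -/
noncomputable def gridPt (n k : ℕ) : ℝ := (2 * (k : ℝ) - 1) * π / (2 * n)


lemma tele (n : ℕ) (hn : 1 ≤ n) (t : ℤ) :
    2 * Real.sin ((t : ℝ) * π / (2 * n)) *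
      ∑ k ∈ Finset.Icc 1 n, Real.cos ((t : ℝ) * gridPt n k) = 0 := by
  have hn0 : (n : ℝ) ≠ 0 := Nat.cast_ne_zero.mpr (by omega)
  rw [Finset.mul_sum]
  rw [← Finset.Ico_add_one_right_eq_Icc, Finset.sum_Ico_eq_sum_range]
  have key : ∀ i : ℕ,
      2 * Real.sin ((t : ℝ) * π / (2 * n)) * Real.cos ((t : ℝ) * gridPt n (1 + i))
        = Real.sin ((t : ℝ) * ((i + 1 : ℕ) : ℝ) * π / n) - Real.sin ((t : ℝ) * i * π / n) := by
    intro i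
    rw [Real.sin_sub_sin]
    push_cast
    have e1 : ((t : ℝ) * ((i : ℝ) + 1) * π / n - (t : ℝ) * i * π / n) / 2
        = (t : ℝ) * π / (2 * n) := by field_simp; ring
    have e2 : ((t : ℝ) * ((i : ℝ) + 1) * π / n + (t : ℝ) * i * π / n) / 2
        = (t : ℝ) * gridPt n (1 + i) := by
      unfold gridPt
      push_cast
      field_simp
      ring
    rw [e1, e2]
  simp only [key]
  rw [Finset.sum_range_sub (fun i => Real.sin ((t : ℝ) * i * π / n))]
  simp only [Nat.succ_sub_one, Nat.add_sub_cancel, Nat.cast_zero, mul_zero, zero_mul, zero_div, Real.sin_zero,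
    sub_zero]
  have : (t : ℝ) * (n : ℝ) * π / n = (t : ℝ) * π := by field_simp
  rw [this, Real.sin_int_mul_pi]

lemma cos_sum_zero (n : ℕ) (hn : 1 ≤ n) (t : ℤ) (ht : ¬ (2 * (n : ℤ)) ∣ t) :
    ∑ k ∈ Finset.Icc 1 n, Real.cos ((t : ℝ) * gridPt n k) = 0 := by
  have h := tele n hn t
  have hs : Real.sin ((t : ℝ) * π / (2 * n)) ≠ 0 := by
    rw [Ne, Real.sin_eq_zero_iff]
    rintro ⟨u, hu⟩
    apply ht
    refine ⟨u, ?_⟩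
    have hn0 : (n : ℝ) ≠ 0 := Nat.cast_ne_zero.mpr (by omega)
    have hπ : (π : ℝ) ≠ 0 := Real.pi_ne_zero
    field_simp at hu
    have h2 : (2 * (n : ℝ) * u) * π = (t : ℝ) * π := by linear_combination π * hu
    have h3 : (2 * (n : ℝ) * u) = (t : ℝ) := mul_right_cancel₀ Real.pi_ne_zero h2
    exact_mod_cast h3.symm
  have h2 : (2 : ℝ) * Real.sin ((t : ℝ) * π / (2 * n)) ≠ 0 := by
    simp [hs]
  exact (mul_eq_zero.mp h).resolve_left h2

lemma cos_sum_dvd (n : ℕ) (hn : 1 ≤ n) (u : ℤ) :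
    ∑ k ∈ Finset.Icc 1 n, Real.cos (((2 * (n : ℤ) * u : ℤ) : ℝ) * gridPt n k)
      = (n : ℝ) * (-1 : ℝ) ^ u := by
  have hn0 : (n : ℝ) ≠ 0 := Nat.cast_ne_zero.mpr (by omega)
  have key : ∀ k ∈ Finset.Icc 1 n,
      Real.cos (((2 * (n : ℤ) * u : ℤ) : ℝ) * gridPt n k) = (-1 : ℝ) ^ u := by
    intro k hk
    have : ((2 * (n : ℤ) * u : ℤ) : ℝ) * gridPt n k = ((u * (2 * k - 1) : ℤ) : ℝ) * π := by
      unfold gridPt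
      have hk1 : 1 ≤ k := (Finset.mem_Icc.mp hk).1
      have : ((2 * (k : ℤ) - 1 : ℤ) : ℝ) = 2 * (k : ℝ) - 1 := by push_cast; ring
      push_cast [hk1]
      field_simp
    rw [this]
    have := Real.cos_int_mul_pi_sub (0 : ℝ) (u * (2 * k - 1))
    simp only [sub_zero, Real.cos_zero, mul_one] at this
    rw [this]
    have hk1 : 1 ≤ k := (Finset.mem_Icc.mp hk).1
    have hodd : Odd (2 * (k : ℤ) - 1) := ⟨(k : ℤ) - 1, by ring⟩
    rcases Int.even_or_odd u with he | ho
    · rw [Even.neg_one_zpow (he.mul_right _), Even.neg_one_zpow he]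
    · rw [Odd.neg_one_zpow (ho.mul hodd), Odd.neg_one_zpow ho]
  rw [Finset.sum_congr rfl key]
  simp [Nat.card_Icc]

lemma sin_mul_sin' (a b : ℝ) :
    Real.sin a * Real.sin b = (Real.cos (a - b) - Real.cos (a + b)) / 2 := by
  rw [Real.cos_sub, Real.cos_add]; ring

lemma oneD_split (n m j : ℕ) :
    ∑ k ∈ Finset.Icc 1 n, Real.sin (j * gridPt n k) * Real.sin (m * gridPt n k)
      = ((∑ k ∈ Finset.Icc 1 n, Real.cos ((((j : ℤ) - m : ℤ) : ℝ) * gridPt n k))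
          - ∑ k ∈ Finset.Icc 1 n, Real.cos ((((j : ℤ) + m : ℤ) : ℝ) * gridPt n k)) / 2 := by
  rw [← Finset.sum_sub_distrib, Finset.sum_div]
  refine Finset.sum_congr rfl fun k _ => ?_
  rw [sin_mul_sin']
  push_cast
  ring_nf

lemma oneD_rep (n m j l : ℕ) (e : ℤ) (hn : 1 ≤ n) (hm : 1 ≤ m) (hmn : m < n)
    (he : e = 1 ∨ e = -1) (hj : (j : ℤ) = 2 * l * n + e * m) :
    ∑ k ∈ Finset.Icc 1 n, Real.sin (j * gridPt n k) * Real.sin (m * gridPt n k)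
      = (e : ℝ) * (-1 : ℝ) ^ l * n / 2 := by
  rw [oneD_split]
  have hdvd2m : ¬ (2 * (n : ℤ)) ∣ 2 * (m : ℤ) := by
    intro hd
    have h1 : (0 : ℤ) < 2 * m := by positivity
    have := Int.le_of_dvd h1 hd
    omega
  rcases he with rfl | rfl
  · have h1 : ((j : ℤ) - m) = 2 * (n : ℤ) * l := by rw [hj]; ring
    have h2 : ¬ (2 * (n : ℤ)) ∣ ((j : ℤ) + m) := by
      intro hd
      have hl : (2 * (n : ℤ)) ∣ 2 * l * n := ⟨l, by ring⟩
      have : (2 * (n : ℤ)) ∣ 2 * m := by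
        have : ((j : ℤ) + m) = 2 * l * n + 2 * m := by rw [hj]; ring
        rw [this] at hd
        exact (dvd_add_right hl).mp hd
      exact hdvd2m this
    rw [h1, cos_sum_dvd n hn l, cos_sum_zero n hn _ h2]
    rw [zpow_natCast]
    push_cast
    ring
  · have h1 : ((j : ℤ) + m) = 2 * (n : ℤ) * l := by rw [hj]; ring
    have h2 : ¬ (2 * (n : ℤ)) ∣ ((j : ℤ) - m) := by
      intro hd
      have hl : (2 * (n : ℤ)) ∣ 2 * l * n := ⟨l, by ring⟩
      have : (2 * (n : ℤ)) ∣ 2 * m := by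
        have he : 2 * (m : ℤ) = 2 * l * n - ((j : ℤ) - m) := by rw [hj]; ring
        rw [he]
        exact dvd_sub hl hd
      exact hdvd2m this
    rw [h1, cos_sum_dvd n hn l, cos_sum_zero n hn _ h2]
    rw [zpow_natCast]
    push_cast
    ring

lemma oneD_zero (n m j : ℕ) (hn : 1 ≤ n) (hm : 1 ≤ m) (hmn : m < n) (hj : 1 ≤ j)
    (h : ¬ ∃ (l : ℕ) (e : ℤ), (e = 1 ∨ e = -1) ∧ (j : ℤ) = 2 * l * n + e * m) :
    ∑ k ∈ Finset.Icc 1 n, Real.sin (j * gridPt n k) * Real.sin (m * gridPt n k) = 0 := by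
  rw [oneD_split]
  have h2 : ¬ (2 * (n : ℤ)) ∣ ((j : ℤ) - m) := by
    rintro ⟨c, hc⟩
    have hj' : (1 : ℤ) ≤ (j : ℤ) := by exact_mod_cast hj
    have hmn' : (m : ℤ) < (n : ℤ) := by exact_mod_cast hmn
    have hc0 : 0 ≤ c := by
      by_contra hcc
      push_neg at hcc
      have hle : c ≤ -1 := by omega
      have h2n : (0 : ℤ) ≤ 2 * n := by positivity
      have := mul_le_mul_of_nonneg_left hle h2n
      linarith
    refine h ⟨c.toNat, 1, Or.inl rfl, ?_⟩
    have : ((c.toNat : ℤ)) = c := Int.toNat_of_nonneg hc0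
    rw [this]
    linarith [hc]
  have h3 : ¬ (2 * (n : ℤ)) ∣ ((j : ℤ) + m) := by
    rintro ⟨c, hc⟩
    have hj' : (1 : ℤ) ≤ (j : ℤ) := by exact_mod_cast hj
    have hm' : (1 : ℤ) ≤ (m : ℤ) := by exact_mod_cast hm
    have hc0 : 0 ≤ c := by
      by_contra hcc
      push_neg at hcc
      have hle : c ≤ -1 := by omega
      have h2n : (0 : ℤ) ≤ 2 * n := by positivity
      have := mul_le_mul_of_nonneg_left hle h2n
      linarith
    refine h ⟨c.toNat, -1, Or.inr rfl, ?_⟩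
    have : ((c.toNat : ℤ)) = c := Int.toNat_of_nonneg hc0
    rw [this]
    linarith [hc]
  rw [cos_sum_zero n hn _ h2, cos_sum_zero n hn _ h3]
  norm_num

lemma factor (n₁ n₂ m₁ m₂ j₁ j₂ : ℕ) :
    ∑ k₁ ∈ Finset.Icc 1 n₁, ∑ k₂ ∈ Finset.Icc 1 n₂,
        xi2 j₁ j₂ (gridPt n₁ k₁) (gridPt n₂ k₂) *
          xi2 m₁ m₂ (gridPt n₁ k₁) (gridPt n₂ k₂)
      = (4 / π ^ 2) *
        (∑ k₁ ∈ Finset.Icc 1 n₁, Real.sin (j₁ * gridPt n₁ k₁) * Real.sin (m₁ * gridPt n₁ k₁)) *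
        (∑ k₂ ∈ Finset.Icc 1 n₂, Real.sin (j₂ * gridPt n₂ k₂) * Real.sin (m₂ * gridPt n₂ k₂)) := by
  rw [mul_assoc, Finset.sum_mul_sum, Finset.mul_sum]
  refine Finset.sum_congr rfl fun k₁ _ => ?_
  rw [Finset.mul_sum]
  refine Finset.sum_congr rfl fun k₂ _ => ?_
  unfold xi2
  ring

theorem stmt_5 (n₁ n₂ m₁ m₂ j₁ j₂ : ℕ)
    (hn₁ : 1 ≤ n₁) (hn₂ : 1 ≤ n₂)
    (hm₁ : 1 ≤ m₁) (hm₁n : m₁ < n₁) (hm₂ : 1 ≤ m₂) (hm₂n : m₂ < n₂)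
    (hj₁ : 1 ≤ j₁) (hj₂ : 1 ≤ j₂) :
    (∀ l₁ l₂ : ℕ, ∀ e₁ e₂ : ℤ,
      (e₁ = 1 ∨ e₁ = -1) → (e₂ = 1 ∨ e₂ = -1) →
      (j₁ : ℤ) = 2 * l₁ * n₁ + e₁ * m₁ → (j₂ : ℤ) = 2 * l₂ * n₂ + e₂ * m₂ →
      ∑ k₁ ∈ Finset.Icc 1 n₁, ∑ k₂ ∈ Finset.Icc 1 n₂,
          xi2 j₁ j₂ (gridPt n₁ k₁) (gridPt n₂ k₂) *
            xi2 m₁ m₂ (gridPt n₁ k₁) (gridPt n₂ k₂)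
        = (e₁ : ℝ) * (e₂ : ℝ) * (-1 : ℝ) ^ (l₁ + l₂) * n₁ * n₂ / π ^ 2) ∧
    ((¬ ∃ (l₁ l₂ : ℕ) (e₁ e₂ : ℤ), (e₁ = 1 ∨ e₁ = -1) ∧ (e₂ = 1 ∨ e₂ = -1) ∧
        (j₁ : ℤ) = 2 * l₁ * n₁ + e₁ * m₁ ∧ (j₂ : ℤ) = 2 * l₂ * n₂ + e₂ * m₂) →
      ∑ k₁ ∈ Finset.Icc 1 n₁, ∑ k₂ ∈ Finset.Icc 1 n₂,
          xi2 j₁ j₂ (gridPt n₁ k₁) (gridPt n₂ k₂) *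
            xi2 m₁ m₂ (gridPt n₁ k₁) (gridPt n₂ k₂)
        = 0) := by
  constructor
  · intro l₁ l₂ e₁ e₂ he₁ he₂ hr₁ hr₂
    rw [factor, oneD_rep n₁ m₁ j₁ l₁ e₁ hn₁ hm₁ hm₁n he₁ hr₁,
      oneD_rep n₂ m₂ j₂ l₂ e₂ hn₂ hm₂ hm₂n he₂ hr₂]
    have hπ : (π : ℝ) ≠ 0 := Real.pi_ne_zero
    rw [pow_add]
    field_simp
    ring
  · intro h
    rw [factor]
    by_cases hx : ∃ (l : ℕ) (e : ℤ), (e = 1 ∨ e = -1) ∧ (j₁ : ℤ) = 2 * l * n₁ + e * m₁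
    · by_cases hy : ∃ (l : ℕ) (e : ℤ), (e = 1 ∨ e = -1) ∧ (j₂ : ℤ) = 2 * l * n₂ + e * m₂
      · obtain ⟨l₁, e₁, he₁, hr₁⟩ := hx
        obtain ⟨l₂, e₂, he₂, hr₂⟩ := hy
        exact absurd ⟨l₁, l₂, e₁, e₂, he₁, he₂, hr₁, hr₂⟩ h
      · rw [oneD_zero n₂ m₂ j₂ hn₂ hm₂ hm₂n hj₂ hy, mul_zero]
    · rw [oneD_zero n₁ m₁ j₁ hn₁ hm₁ hm₁n hj₁ hx, mul_zero, zero_mul]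
end

section
/- Let a = (a_{m₁,m₂})_{m₁,m₂ ≥ 1} be an absolutely summable family of reals and define φ(x₁,x₂) = ∑_{m₁,m₂ ≥ 1} a_{m₁,m₂} ξ_{m₁,m₂}(x₁,x₂). Then for all integers n₁, n₂ ≥ 1 and 1 ≤ j₁ < n₁, 1 ≤ j₂ < n₂: (π²/(n₁n₂)) ∑_{k₁=1}^{n₁} ∑_{k₂=1}^{n₂} φ(x_{k₁,k₂}) ξ_{j₁,j₂}(x_{k₁,k₂}) − a_{j₁,j₂} = ∑_{l₂=1}^{∞} (−1)^{l₂} (a_{j₁, 2l₂n₂+j₂} − a_{j₁, 2l₂n₂−j₂}) + ∑_{l₁=1}^{∞} (−1)^{l₁} (a_{2l₁n₁+j₁, j₂} − a_{2l₁n₁−j₁, j₂}) + ∑_{l₁=1}^{∞} ∑_{l₂=1}^{∞} (−1)^{l₁+l₂} (a_{2l₁n₁+j₁, 2l₂n₂+j₂} − a_{2l₁n₁+j₁, 2l₂n₂−j₂} + a_{2l₁n₁−j₁, 2l₂n₂−j₂} − a_{2l₁n₁−j₁, 2l₂n₂+j₂}). -/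
open Real

/-- Aliasing coefficient. -/
noncomputable def coefD (n j m : ℕ) : ℝ :=
  if m % (2*n) = j ∨ m % (2*n) = 2*n - j then (-1 : ℝ)^(m/(2*n)) else 0

lemma abs_coefD_le (n j m : ℕ) : |coefD n j m| ≤ 1 := by
  unfold coefD
  split
  · rw [abs_pow, abs_neg, abs_one, one_pow]
  · simp

lemma cos_sum_grid (n : ℕ) (hn : 1 ≤ n) (c : ℕ) :
    ∑ k ∈ Finset.Icc 1 n, Real.cos (c * gridPt n k)
      = if 2*n ∣ c then (n : ℝ) * (-1 : ℝ) ^ (c / (2*n)) else 0 := by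
  have hπ : (π : ℝ) ≠ 0 := Real.pi_ne_zero
  have hn0 : (n : ℝ) ≠ 0 := Nat.cast_ne_zero.2 (by omega)
  by_cases hd : 2*n ∣ c
  · rw [if_pos hd]
    obtain ⟨t, ht⟩ := hd
    have hct : c / (2*n) = t := by rw [ht]; exact Nat.mul_div_cancel_left t (by omega)
    rw [hct]
    have hterm : ∀ k ∈ Finset.Icc 1 n, Real.cos (c * gridPt n k) = (-1:ℝ)^t := by
      intro k hk
      have hk1 : 1 ≤ k := (Finset.mem_Icc.1 hk).1
      have harg : (c : ℝ) * gridPt n k = ((t*(2*k-1) : ℕ) : ℝ) * π := by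
        unfold gridPt
        have h2k : ((t*(2*k-1) : ℕ) : ℝ) = t * (2*(k:ℝ) - 1) := by
          push_cast [Nat.cast_sub (by omega : 1 ≤ 2*k)]; ring
        rw [h2k, ht]
        push_cast
        field_simp
      rw [harg]
      have := Real.cos_nat_mul_pi_sub 0 (t*(2*k-1))
      simp only [sub_zero, Real.cos_zero, mul_one] at this
      rw [this]
      rcases Nat.even_or_odd t with he | ho
      · rw [pow_mul, he.neg_one_pow, one_pow]
      · rw [pow_mul, ho.neg_one_pow]
        exact Odd.neg_one_pow ⟨k-1, by omega⟩
    rw [Finset.sum_congr rfl hterm, Finset.sum_const, Nat.card_Icc]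
    simp [nsmul_eq_mul]
  · rw [if_neg hd]
    set θ : ℝ := (c:ℝ) * π / (2*n) with hθ
    have hsin : Real.sin θ ≠ 0 := by
      intro h
      rcases Real.sin_eq_zero_iff.1 h with ⟨s, hs⟩
      apply hd
      have h1 : (s : ℝ) * (2*n) = c := by
        apply mul_right_cancel₀ hπ
        have hx : (s:ℝ) * π * (2*(n:ℝ)) = (c:ℝ) * π := by
          rw [hs, hθ]; field_simp
        calc (s:ℝ)*(2*(n:ℝ))*π = (s:ℝ)*π*(2*(n:ℝ)) := by ring
        _ = (c:ℝ)*π := hx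
      have h2 : (s * (2*n) : ℤ) = (c : ℤ) := by exact_mod_cast h1
      have : ((2*n : ℕ) : ℤ) ∣ (c : ℤ) := ⟨s, by push_cast; linarith [h2]⟩
      exact_mod_cast Int.natCast_dvd_natCast.mp this
    have htel : ∀ k ∈ Finset.range n,
        Real.sin (2*((k:ℝ)+1)*θ) - Real.sin (2*(k:ℝ)*θ)
          = 2 * Real.sin θ * Real.cos ((2*(k:ℝ)+1)*θ) := by
      intro k _
      have e1 : (2*((k:ℝ)+1)*θ - 2*(k:ℝ)*θ)/2 = θ := by ring
      have e2 : (2*((k:ℝ)+1)*θ + 2*(k:ℝ)*θ)/2 = (2*(k:ℝ)+1)*θ := by ring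
      rw [Real.sin_sub_sin, e1, e2]
    have hsum2 : 2 * Real.sin θ * ∑ k ∈ Finset.range n, Real.cos ((2*(k:ℝ)+1)*θ)
        = Real.sin (2*(n:ℝ)*θ) := by
      rw [Finset.mul_sum]
      have : ∀ k ∈ Finset.range n, 2 * Real.sin θ * Real.cos ((2*(k:ℝ)+1)*θ)
          = (fun i : ℕ => Real.sin (2*(i:ℝ)*θ)) (k+1) - (fun i : ℕ => Real.sin (2*(i:ℝ)*θ)) k := by
        intro k hk
        rw [← htel k hk]
        push_cast
        rfl
      rw [Finset.sum_congr rfl this, Finset.sum_range_sub (fun i : ℕ => Real.sin (2*(i:ℝ)*θ))]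
      norm_num
    have hzero : Real.sin (2*(n:ℝ)*θ) = 0 := by
      have h2nθ : 2*(n:ℝ)*θ = (c:ℝ) * π := by rw [hθ]; field_simp
      rw [h2nθ]
      exact Real.sin_nat_mul_pi c
    have hS : ∑ k ∈ Finset.range n, Real.cos ((2*(k:ℝ)+1)*θ) = 0 := by
      have h2 : (2 : ℝ) * Real.sin θ ≠ 0 := by
        intro h; rcases mul_eq_zero.1 h with h | h
        · norm_num at h
        · exact hsin h
      rw [hzero] at hsum2
      rcases mul_eq_zero.1 hsum2 with h | h
      · exact absurd h h2
      · exact h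
    have hindex : ∑ k ∈ Finset.Icc 1 n, Real.cos (c * gridPt n k)
        = ∑ k ∈ Finset.range n, Real.cos ((2*(k:ℝ)+1)*θ) := by
      rw [show Finset.Icc 1 n = Finset.Ico 1 (n+1) by rw [Finset.Ico_add_one_right_eq_Icc]]
      rw [Finset.sum_Ico_eq_sum_range]
      simp only [Nat.add_sub_cancel]
      apply Finset.sum_congr rfl
      intro k _
      congr 1
      unfold gridPt
      rw [hθ]
      push_cast
      field_simp
      ring
    rw [hindex, hS]

lemma orth (n j m : ℕ) (hn : 1 ≤ n) (hj : 1 ≤ j) (hjn : j < n) :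
    ∑ k ∈ Finset.Icc 1 n, Real.sin (m * gridPt n k) * Real.sin (j * gridPt n k)
      = (n : ℝ)/2 * coefD n j m := by
  rcases le_or_gt j m with hmj | hmj
  · have hpt : ∀ x : ℝ, Real.sin (m*x) * Real.sin (j*x)
        = (Real.cos (((m - j : ℕ) : ℝ)*x) - Real.cos (((m + j : ℕ) : ℝ)*x))/2 := by
      intro x
      have hc1 : ((m - j : ℕ) : ℝ) = (m : ℝ) - j := by
        push_cast [Nat.cast_sub hmj]; ring
      have hc2 : ((m + j : ℕ) : ℝ) = (m : ℝ) + j := by push_cast; ring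
      rw [hc1, hc2, Real.cos_sub_cos]
      have e1 : (((m:ℝ) - j)*x + ((m:ℝ) + j)*x)/2 = m*x := by ring
      have e2 : (((m:ℝ) - j)*x - ((m:ℝ) + j)*x)/2 = -(j*x) := by ring
      rw [e1, e2, Real.sin_neg]
      ring
    rw [Finset.sum_congr rfl (fun k _ => hpt (gridPt n k)), ← Finset.sum_div,
      Finset.sum_sub_distrib, cos_sum_grid n hn (m-j), cos_sum_grid n hn (m+j)]
    by_cases h1 : 2*n ∣ (m - j) <;> by_cases h2 : 2*n ∣ (m + j)
    · exfalso
      have hd : 2*n ∣ ((m+j) - (m-j)) := Nat.dvd_sub h2 h1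
      have he : (m+j) - (m-j) = 2*j := by omega
      rw [he] at hd
      have := Nat.le_of_dvd (by omega) hd
      omega
    · obtain ⟨t, ht⟩ := id h1
      have hm : m = j + 2*n*t := by omega
      have hmod : m % (2*n) = j := by
        rw [hm, Nat.add_mul_mod_self_left, Nat.mod_eq_of_lt (by omega)]
      have hdiv : m / (2*n) = t := by
        rw [hm, Nat.add_mul_div_left _ _ (by omega : 0 < 2*n),
          Nat.div_eq_of_lt (by omega), zero_add]
      have hdiv2 : (m - j)/(2*n) = t := by
        rw [ht]; exact Nat.mul_div_cancel_left t (by omega)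
      rw [if_pos h1, if_neg h2, hdiv2]
      unfold coefD
      rw [if_pos (Or.inl hmod), hdiv]
      ring
    · obtain ⟨t, ht⟩ := id h2
      have ht1 : 0 < t := by
        rcases Nat.eq_zero_or_pos t with h | h
        · rw [h, mul_zero] at ht; omega
        · exact h
      have hee : 2*n*t = 2*n*(t-1) + 2*n := by
        have e : t - 1 + 1 = t := by omega
        calc 2*n*t = 2*n*((t-1)+1) := by rw [e]
        _ = 2*n*(t-1) + 2*n := by ring
      have hm : m = (2*n - j) + 2*n*(t-1) := by omega
      have hmod : m % (2*n) = 2*n - j := by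
        rw [hm, Nat.add_mul_mod_self_left, Nat.mod_eq_of_lt (by omega)]
      have hdiv : m / (2*n) = t - 1 := by
        rw [hm, Nat.add_mul_div_left _ _ (by omega : 0 < 2*n),
          Nat.div_eq_of_lt (by omega), zero_add]
      have hdiv2 : (m + j)/(2*n) = t := by
        rw [ht]; exact Nat.mul_div_cancel_left t (by omega)
      rw [if_neg h1, if_pos h2, hdiv2]
      unfold coefD
      rw [if_pos (Or.inr hmod), hdiv]
      have hpow : (-1:ℝ)^t = -(-1:ℝ)^(t-1) := by
        conv_lhs => rw [show t = (t-1)+1 by omega]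
        rw [pow_succ]
        ring
      rw [hpow]
      ring
    · rw [if_neg h1, if_neg h2]
      have hdm := Nat.div_add_mod m (2*n)
      unfold coefD
      rw [if_neg ?_]
      · ring
      rintro (h | h)
      · exact h1 ⟨m/(2*n), by omega⟩
      · refine h2 ⟨m/(2*n) + 1, ?_⟩
        have e : 2*n*(m/(2*n)+1) = 2*n*(m/(2*n)) + 2*n := by ring
        omega
  · have hpt : ∀ x : ℝ, Real.sin (m*x) * Real.sin (j*x)
        = (Real.cos (((j - m : ℕ) : ℝ)*x) - Real.cos (((m + j : ℕ) : ℝ)*x))/2 := by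
      intro x
      have hc1 : ((j - m : ℕ) : ℝ) = (j : ℝ) - m := by
        push_cast [Nat.cast_sub hmj.le]; ring
      have hc2 : ((m + j : ℕ) : ℝ) = (m : ℝ) + j := by push_cast; ring
      rw [hc1, hc2, Real.cos_sub_cos]
      have e1 : (((j:ℝ) - m)*x + ((m:ℝ) + j)*x)/2 = j*x := by ring
      have e2 : (((j:ℝ) - m)*x - ((m:ℝ) + j)*x)/2 = -(m*x) := by ring
      rw [e1, e2, Real.sin_neg]
      ring
    rw [Finset.sum_congr rfl (fun k _ => hpt (gridPt n k)), ← Finset.sum_div,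
      Finset.sum_sub_distrib, cos_sum_grid n hn (j-m), cos_sum_grid n hn (m+j)]
    have h1 : ¬ 2*n ∣ (j - m) := by
      intro h
      have := Nat.le_of_dvd (by omega) h
      omega
    have h2 : ¬ 2*n ∣ (m + j) := by
      intro h
      have := Nat.le_of_dvd (by omega) h
      omega
    rw [if_neg h1, if_neg h2]
    have hmod : m % (2*n) = m := Nat.mod_eq_of_lt (by omega)
    unfold coefD
    rw [if_neg ?_]
    · ring
    rintro (h | h) <;> omega

def vmap (n j : ℕ) : PUnit ⊕ (ℕ ⊕ ℕ) → ℕ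
  | Sum.inl _ => j
  | Sum.inr (Sum.inl l) => 2*(l+1)*n + j
  | Sum.inr (Sum.inr l) => 2*(l+1)*n - j

section vmaplemmas
variable {n j : ℕ} (hn : 1 ≤ n) (hj : 1 ≤ j) (hjn : j < n)
include hn hj hjn

lemma mplus_mod (l : ℕ) : (2*(l+1)*n + j) % (2*n) = j := by
  rw [show 2*(l+1)*n + j = j + 2*n*(l+1) from by ring, Nat.add_mul_mod_self_left,
    Nat.mod_eq_of_lt (by omega)]

lemma mplus_div (l : ℕ) : (2*(l+1)*n + j) / (2*n) = l + 1 := by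
  rw [show 2*(l+1)*n + j = j + 2*n*(l+1) from by ring,
    Nat.add_mul_div_left _ _ (by omega : 0 < 2*n), Nat.div_eq_of_lt (by omega), zero_add]

lemma mminus_eq (l : ℕ) : 2*(l+1)*n - j = (2*n - j) + 2*n*l := by
  have e : 2*(l+1)*n = 2*n + 2*n*l := by ring
  omega

lemma mminus_mod (l : ℕ) : (2*(l+1)*n - j) % (2*n) = 2*n - j := by
  rw [mminus_eq hn hj hjn, Nat.add_mul_mod_self_left, Nat.mod_eq_of_lt (by omega)]

lemma mminus_div (l : ℕ) : (2*(l+1)*n - j) / (2*n) = l := by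
  rw [mminus_eq hn hj hjn, Nat.add_mul_div_left _ _ (by omega : 0 < 2*n),
    Nat.div_eq_of_lt (by omega), zero_add]

lemma coefD_base : coefD n j j = 1 := by
  unfold coefD
  rw [if_pos (Or.inl (Nat.mod_eq_of_lt (by omega))), Nat.div_eq_of_lt (by omega), pow_zero]

lemma coefD_plus (l : ℕ) : coefD n j (2*(l+1)*n + j) = (-1:ℝ)^(l+1) := by
  unfold coefD
  rw [if_pos (Or.inl (mplus_mod hn hj hjn l)), mplus_div hn hj hjn l]

lemma coefD_minus (l : ℕ) : coefD n j (2*(l+1)*n - j) = (-1:ℝ)^l := by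
  unfold coefD
  rw [if_pos (Or.inr (mminus_mod hn hj hjn l)), mminus_div hn hj hjn l]

lemma vmap_inj : Function.Injective (vmap n j) := by
  intro o o' h
  have base_mod : j % (2*n) = j := Nat.mod_eq_of_lt (by omega)
  have base_div : j / (2*n) = 0 := Nat.div_eq_of_lt (by omega)
  rcases o with _ | (l | l) <;> rcases o' with _ | (l' | l') <;>
    simp only [vmap] at h
  · exact congrArg Sum.inl (Subsingleton.elim _ _)
  · exfalso
    have h1 := congrArg (· / (2*n)) h
    simp only [base_div, mplus_div hn hj hjn] at h1
    omega
  · exfalso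
    have h1 := congrArg (· % (2*n)) h
    simp only [base_mod, mminus_mod hn hj hjn] at h1
    omega
  · exfalso
    have h1 := congrArg (· / (2*n)) h
    simp only [base_div, mplus_div hn hj hjn] at h1
    omega
  · have h1 := congrArg (· / (2*n)) h
    simp only [mplus_div hn hj hjn] at h1
    have : l = l' := by omega
    rw [this]
  · exfalso
    have h1 := congrArg (· % (2*n)) h
    simp only [mplus_mod hn hj hjn, mminus_mod hn hj hjn] at h1
    omega
  · exfalso
    have h1 := congrArg (· % (2*n)) h
    simp only [base_mod, mminus_mod hn hj hjn] at h1
    omega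
  · exfalso
    have h1 := congrArg (· % (2*n)) h
    simp only [mplus_mod hn hj hjn, mminus_mod hn hj hjn] at h1
    omega
  · have h1 := congrArg (· / (2*n)) h
    simp only [mminus_div hn hj hjn] at h1
    have : l = l' := by omega
    rw [this]

lemma vmap_support {m : ℕ} (hm : coefD n j m ≠ 0) : ∃ o, vmap n j o = m := by
  have hdm := Nat.div_add_mod m (2*n)
  unfold coefD at hm
  split at hm
  · rename_i hc
    rcases hc with hc | hc
    · rcases Nat.eq_zero_or_pos (m / (2*n)) with hq | hq
      · refine ⟨Sum.inl PUnit.unit, ?_⟩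
        simp only [vmap]
        have e : 2*n*(m/(2*n)) = 0 := by rw [hq, Nat.mul_zero]
        omega
      · refine ⟨Sum.inr (Sum.inl (m/(2*n) - 1)), ?_⟩
        simp only [vmap]
        have e : 2*(m/(2*n) - 1 + 1)*n = 2*n*(m/(2*n)) := by
          have e2 : m/(2*n) - 1 + 1 = m/(2*n) := by omega
          rw [e2]; ring
        omega
    · refine ⟨Sum.inr (Sum.inr (m/(2*n))), ?_⟩
      simp only [vmap]
      have e : 2*(m/(2*n) + 1)*n = 2*n*(m/(2*n)) + 2*n := by ring
      omega
  · exact absurd rfl hm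

end vmaplemmas

private lemma hasSum_sum_split {α β : Type} {f : α ⊕ β → ℝ} {x y : ℝ}
    (h1 : HasSum (fun u => f (Sum.inl u)) x) (h2 : HasSum (fun u => f (Sum.inr u)) y) :
    HasSum f (x + y) := by
  have he : Sum.elim (fun u => f (Sum.inl u)) (fun u => f (Sum.inr u)) = f := by
    funext p; cases p <;> rfl
  rw [← he]
  exact HasSum.add_isCompl Set.isCompl_range_inl_range_inr
    (Sum.inl_injective.hasSum_range_iff.2 h1) (Sum.inr_injective.hasSum_range_iff.2 h2)

private lemma hasSum_prod_split_left {α β γ : Type} {f : (α ⊕ β) × γ → ℝ} {x y : ℝ}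
    (h1 : HasSum (fun p : α × γ => f (Sum.inl p.1, p.2)) x)
    (h2 : HasSum (fun p : β × γ => f (Sum.inr p.1, p.2)) y) : HasSum f (x + y) := by
  rw [← (Equiv.sumProdDistrib α β γ).symm.hasSum_iff]
  exact hasSum_sum_split h1 h2

private lemma hasSum_prod_split_right {α β γ : Type} {f : γ × (α ⊕ β) → ℝ} {x y : ℝ}
    (h1 : HasSum (fun p : γ × α => f (p.1, Sum.inl p.2)) x)
    (h2 : HasSum (fun p : γ × β => f (p.1, Sum.inr p.2)) y) : HasSum f (x + y) := by
  rw [← (Equiv.prodSumDistrib γ α β).symm.hasSum_iff]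
  exact hasSum_sum_split h1 h2

private lemma hasSum_punit_prod {γ : Type} {f : PUnit × γ → ℝ} {x : ℝ}
    (h : HasSum (fun c => f (PUnit.unit, c)) x) : HasSum f x := by
  rw [← (Equiv.punitProd γ).symm.hasSum_iff]
  exact h

private lemma hasSum_prod_punit {γ : Type} {f : γ × PUnit → ℝ} {x : ℝ}
    (h : HasSum (fun c => f (c, PUnit.unit)) x) : HasSum f x := by
  rw [← (Equiv.prodPUnit γ).symm.hasSum_iff]
  exact h

private lemma hasSum_punit (f : PUnit → ℝ) : HasSum f (f PUnit.unit) := by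
  simpa using hasSum_fintype f

set_option maxHeartbeats 1600000 in
theorem stmt_6 (a : ℕ → ℕ → ℝ)
    (ha0 : ∀ m₁ m₂ : ℕ, m₁ = 0 ∨ m₂ = 0 → a m₁ m₂ = 0)
    (hsum : Summable fun m : ℕ × ℕ => |a m.1 m.2|)
    (φ : ℝ → ℝ → ℝ)
    (hφ : ∀ x₁ x₂ : ℝ, φ x₁ x₂ = ∑' m : ℕ × ℕ, a m.1 m.2 * xi2 m.1 m.2 x₁ x₂)
    (n₁ n₂ j₁ j₂ : ℕ) (hn₁ : 1 ≤ n₁) (hn₂ : 1 ≤ n₂)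
    (hj₁ : 1 ≤ j₁) (hj₁n : j₁ < n₁) (hj₂ : 1 ≤ j₂) (hj₂n : j₂ < n₂) :
    (π ^ 2 / (n₁ * n₂)) *
      ∑ k₁ ∈ Finset.Icc 1 n₁, ∑ k₂ ∈ Finset.Icc 1 n₂,
        φ (gridPt n₁ k₁) (gridPt n₂ k₂) * xi2 j₁ j₂ (gridPt n₁ k₁) (gridPt n₂ k₂)
      - a j₁ j₂
    = (∑' l₂ : ℕ, (-1 : ℝ) ^ (l₂ + 1) *
          (a j₁ (2 * (l₂ + 1) * n₂ + j₂) - a j₁ (2 * (l₂ + 1) * n₂ - j₂)))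
      + (∑' l₁ : ℕ, (-1 : ℝ) ^ (l₁ + 1) *
          (a (2 * (l₁ + 1) * n₁ + j₁) j₂ - a (2 * (l₁ + 1) * n₁ - j₁) j₂))
      + ∑' l : ℕ × ℕ, (-1 : ℝ) ^ ((l.1 + 1) + (l.2 + 1)) *
          (a (2 * (l.1 + 1) * n₁ + j₁) (2 * (l.2 + 1) * n₂ + j₂)
            - a (2 * (l.1 + 1) * n₁ + j₁) (2 * (l.2 + 1) * n₂ - j₂)
            + a (2 * (l.1 + 1) * n₁ - j₁) (2 * (l.2 + 1) * n₂ - j₂)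
            - a (2 * (l.1 + 1) * n₁ - j₁) (2 * (l.2 + 1) * n₂ + j₂)) := by
  have hπ : (π : ℝ) ≠ 0 := Real.pi_ne_zero
  have hπpos : (0:ℝ) < π := Real.pi_pos
  have hn1R : ((n₁:ℝ)) ≠ 0 := Nat.cast_ne_zero.2 (by omega)
  have hn2R : ((n₂:ℝ)) ≠ 0 := Nat.cast_ne_zero.2 (by omega)
  set F : ℕ × ℕ → ℝ := fun m => a m.1 m.2 * (coefD n₁ j₁ m.1 * coefD n₂ j₂ m.2) with hFdef
  -- summability helper
  have hcomp : ∀ {ι : Type} (u : ι → ℕ × ℕ), Function.Injective u → ∀ (c : ι → ℝ),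
      (∀ i, |c i| ≤ 1) → Summable (fun i => c i * a (u i).1 (u i).2) := by
    intro ι u hu c hc
    rw [← summable_abs_iff]
    refine Summable.of_nonneg_of_le (fun i => abs_nonneg _) (fun i => ?_)
      (hsum.comp_injective hu)
    show |c i * a (u i).1 (u i).2| ≤ |a (u i).1 (u i).2|
    rw [abs_mul]
    calc |c i| * |a (u i).1 (u i).2| ≤ 1 * |a (u i).1 (u i).2| :=
          mul_le_mul_of_nonneg_right (hc i) (abs_nonneg _)
    _ = |a (u i).1 (u i).2| := one_mul _
  -- injectivity of index maps
  have hinjp₁ : Function.Injective (fun l : ℕ => 2*(l+1)*n₁ + j₁) := by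
    intro l l' h
    have h1 := congrArg (· / (2*n₁)) h
    simp only [mplus_div hn₁ hj₁ hj₁n] at h1
    omega
  have hinjm₁ : Function.Injective (fun l : ℕ => 2*(l+1)*n₁ - j₁) := by
    intro l l' h
    have h1 := congrArg (· / (2*n₁)) h
    simp only [mminus_div hn₁ hj₁ hj₁n] at h1
    omega
  have hinjp₂ : Function.Injective (fun l : ℕ => 2*(l+1)*n₂ + j₂) := by
    intro l l' h
    have h1 := congrArg (· / (2*n₂)) h
    simp only [mplus_div hn₂ hj₂ hj₂n] at h1
    omega
  have hinjm₂ : Function.Injective (fun l : ℕ => 2*(l+1)*n₂ - j₂) := by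
    intro l l' h
    have h1 := congrArg (· / (2*n₂)) h
    simp only [mminus_div hn₂ hj₂ hj₂n] at h1
    omega
  have habs1 : ∀ l : ℕ, |(-1:ℝ)^(l+1)| ≤ 1 := by
    intro l; rw [abs_pow, abs_neg, abs_one, one_pow]
  have habs0 : ∀ l : ℕ, |(-1:ℝ)^l| ≤ 1 := by
    intro l; rw [abs_pow, abs_neg, abs_one, one_pow]
  -- the eight summable component functions
  have hsA₁ : Summable (fun l : ℕ => (-1:ℝ)^(l+1) * a j₁ (2*(l+1)*n₂ + j₂)) :=
    hcomp (fun l => (j₁, 2*(l+1)*n₂ + j₂))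
      (fun l l' h => hinjp₂ (congrArg Prod.snd h)) _ habs1
  have hsB₁ : Summable (fun l : ℕ => (-1:ℝ)^l * a j₁ (2*(l+1)*n₂ - j₂)) :=
    hcomp (fun l => (j₁, 2*(l+1)*n₂ - j₂))
      (fun l l' h => hinjm₂ (congrArg Prod.snd h)) _ habs0
  have hsA₂ : Summable (fun l : ℕ => (-1:ℝ)^(l+1) * a (2*(l+1)*n₁ + j₁) j₂) :=
    hcomp (fun l => (2*(l+1)*n₁ + j₁, j₂))
      (fun l l' h => hinjp₁ (congrArg Prod.fst h)) _ habs1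
  have hsB₂ : Summable (fun l : ℕ => (-1:ℝ)^l * a (2*(l+1)*n₁ - j₁) j₂) :=
    hcomp (fun l => (2*(l+1)*n₁ - j₁, j₂))
      (fun l l' h => hinjm₁ (congrArg Prod.fst h)) _ habs0
  have habs2 : ∀ l : ℕ × ℕ, |(-1:ℝ)^(l.1+l.2)| ≤ 1 := by
    intro l; rw [abs_pow, abs_neg, abs_one, one_pow]
  have habs3 : ∀ l : ℕ × ℕ, |(-1:ℝ)^(l.1+l.2+1)| ≤ 1 := by
    intro l; rw [abs_pow, abs_neg, abs_one, one_pow]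
  have hprodinj : ∀ {f g : ℕ → ℕ}, Function.Injective f → Function.Injective g →
      Function.Injective (fun l : ℕ×ℕ => (f l.1, g l.2)) := by
    intro f g hf hg l l' h
    have h1 := congrArg Prod.fst h
    have h2 := congrArg Prod.snd h
    exact Prod.ext (hf h1) (hg h2)
  have hsT₁ : Summable (fun l : ℕ×ℕ => (-1:ℝ)^(l.1+l.2) * a (2*(l.1+1)*n₁ + j₁) (2*(l.2+1)*n₂ + j₂)) :=
    hcomp (fun l : ℕ×ℕ => (2*(l.1+1)*n₁ + j₁, 2*(l.2+1)*n₂ + j₂))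
      (hprodinj (f := fun x => 2*(x+1)*n₁ + j₁) (g := fun x => 2*(x+1)*n₂ + j₂) hinjp₁ hinjp₂)
      (fun l => (-1:ℝ)^(l.1+l.2)) habs2
  have hsT₂ : Summable (fun l : ℕ×ℕ => (-1:ℝ)^(l.1+l.2+1) * a (2*(l.1+1)*n₁ + j₁) (2*(l.2+1)*n₂ - j₂)) :=
    hcomp (fun l : ℕ×ℕ => (2*(l.1+1)*n₁ + j₁, 2*(l.2+1)*n₂ - j₂))
      (hprodinj (f := fun x => 2*(x+1)*n₁ + j₁) (g := fun x => 2*(x+1)*n₂ - j₂) hinjp₁ hinjm₂)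
      (fun l => (-1:ℝ)^(l.1+l.2+1)) habs3
  have hsT₃ : Summable (fun l : ℕ×ℕ => (-1:ℝ)^(l.1+l.2+1) * a (2*(l.1+1)*n₁ - j₁) (2*(l.2+1)*n₂ + j₂)) :=
    hcomp (fun l : ℕ×ℕ => (2*(l.1+1)*n₁ - j₁, 2*(l.2+1)*n₂ + j₂))
      (hprodinj (f := fun x => 2*(x+1)*n₁ - j₁) (g := fun x => 2*(x+1)*n₂ + j₂) hinjm₁ hinjp₂)
      (fun l => (-1:ℝ)^(l.1+l.2+1)) habs3
  have hsT₄ : Summable (fun l : ℕ×ℕ => (-1:ℝ)^(l.1+l.2) * a (2*(l.1+1)*n₁ - j₁) (2*(l.2+1)*n₂ - j₂)) :=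
    hcomp (fun l : ℕ×ℕ => (2*(l.1+1)*n₁ - j₁, 2*(l.2+1)*n₂ - j₂))
      (hprodinj (f := fun x => 2*(x+1)*n₁ - j₁) (g := fun x => 2*(x+1)*n₂ - j₂) hinjm₁ hinjm₂)
      (fun l => (-1:ℝ)^(l.1+l.2)) habs2
  -- coefD values at the relevant points
  have hc1b : coefD n₁ j₁ j₁ = 1 := coefD_base hn₁ hj₁ hj₁n
  have hc2b : coefD n₂ j₂ j₂ = 1 := coefD_base hn₂ hj₂ hj₂n
  have hpow2 : ∀ s t : ℕ, (-1:ℝ)^(s+1) * (-1:ℝ)^(t+1) = (-1:ℝ)^(s+t) := by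
    intro s t
    rw [← pow_add, show s+1+(t+1) = (s+t)+2 from by omega, pow_add]
    norm_num
  have hpow3 : ∀ s t : ℕ, (-1:ℝ)^(s+1) * (-1:ℝ)^t = (-1:ℝ)^(s+t+1) := by
    intro s t
    rw [← pow_add, show s+1+t = s+t+1 from by omega]
  have hpow4 : ∀ s t : ℕ, (-1:ℝ)^s * (-1:ℝ)^(t+1) = (-1:ℝ)^(s+t+1) := by
    intro s t
    rw [← pow_add, show s+(t+1) = s+t+1 from by omega]
  have hpow5 : ∀ s t : ℕ, (-1:ℝ)^s * (-1:ℝ)^t = (-1:ℝ)^(s+t) := by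
    intro s t
    rw [← pow_add]
  -- the total HasSum
  have hTot : HasSum (fun p : (PUnit ⊕ (ℕ⊕ℕ)) × (PUnit ⊕ (ℕ⊕ℕ)) =>
        F (vmap n₁ j₁ p.1, vmap n₂ j₂ p.2))
      ((a j₁ j₂ + ((∑' l : ℕ, (-1:ℝ)^(l+1) * a j₁ (2*(l+1)*n₂ + j₂))
            + (∑' l : ℕ, (-1:ℝ)^l * a j₁ (2*(l+1)*n₂ - j₂))))
        + (((∑' l : ℕ, (-1:ℝ)^(l+1) * a (2*(l+1)*n₁ + j₁) j₂)
            + (∑' l : ℕ, (-1:ℝ)^l * a (2*(l+1)*n₁ - j₁) j₂))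
          + (((∑' l : ℕ×ℕ, (-1:ℝ)^(l.1+l.2) * a (2*(l.1+1)*n₁ + j₁) (2*(l.2+1)*n₂ + j₂))
              + (∑' l : ℕ×ℕ, (-1:ℝ)^(l.1+l.2+1) * a (2*(l.1+1)*n₁ + j₁) (2*(l.2+1)*n₂ - j₂)))
            + ((∑' l : ℕ×ℕ, (-1:ℝ)^(l.1+l.2+1) * a (2*(l.1+1)*n₁ - j₁) (2*(l.2+1)*n₂ + j₂))
              + (∑' l : ℕ×ℕ, (-1:ℝ)^(l.1+l.2) * a (2*(l.1+1)*n₁ - j₁) (2*(l.2+1)*n₂ - j₂)))))) := by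
    apply hasSum_prod_split_left
    · apply hasSum_punit_prod
      apply hasSum_sum_split
      · -- (j₁, j₂)
        have hval : F (vmap n₁ j₁ (Sum.inl PUnit.unit), vmap n₂ j₂ (Sum.inl PUnit.unit))
            = a j₁ j₂ := by
          simp only [vmap, hFdef, hc1b, hc2b]
          ring
        convert hasSum_punit (fun u : PUnit =>
            F (vmap n₁ j₁ (Sum.inl PUnit.unit), vmap n₂ j₂ (Sum.inl u))) using 1
        exact hval.symm
      · apply hasSum_sum_split
        · have e : (fun l : ℕ => F (vmap n₁ j₁ (Sum.inl PUnit.unit), vmap n₂ j₂ (Sum.inr (Sum.inl l))))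
              = fun l : ℕ => (-1:ℝ)^(l+1) * a j₁ (2*(l+1)*n₂ + j₂) := by
            funext l
            simp only [vmap, hFdef, hc1b, coefD_plus hn₂ hj₂ hj₂n]
            ring
          rw [e]
          exact hsA₁.hasSum
        · have e : (fun l : ℕ => F (vmap n₁ j₁ (Sum.inl PUnit.unit), vmap n₂ j₂ (Sum.inr (Sum.inr l))))
              = fun l : ℕ => (-1:ℝ)^l * a j₁ (2*(l+1)*n₂ - j₂) := by
            funext l
            simp only [vmap, hFdef, hc1b, coefD_minus hn₂ hj₂ hj₂n]
            ring
          rw [e]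
          exact hsB₁.hasSum
    · apply hasSum_prod_split_right
      · apply hasSum_prod_punit
        apply hasSum_sum_split
        · have e : (fun l : ℕ => F (vmap n₁ j₁ (Sum.inr (Sum.inl l)), vmap n₂ j₂ (Sum.inl PUnit.unit)))
              = fun l : ℕ => (-1:ℝ)^(l+1) * a (2*(l+1)*n₁ + j₁) j₂ := by
            funext l
            simp only [vmap, hFdef, hc2b, coefD_plus hn₁ hj₁ hj₁n]
            ring
          rw [e]
          exact hsA₂.hasSum
        · have e : (fun l : ℕ => F (vmap n₁ j₁ (Sum.inr (Sum.inr l)), vmap n₂ j₂ (Sum.inl PUnit.unit)))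
              = fun l : ℕ => (-1:ℝ)^l * a (2*(l+1)*n₁ - j₁) j₂ := by
            funext l
            simp only [vmap, hFdef, hc2b, coefD_minus hn₁ hj₁ hj₁n]
            ring
          rw [e]
          exact hsB₂.hasSum
      · apply hasSum_prod_split_left
        · apply hasSum_prod_split_right
          · have e : (fun p : ℕ×ℕ => F (vmap n₁ j₁ (Sum.inr (Sum.inl p.1)), vmap n₂ j₂ (Sum.inr (Sum.inl p.2))))
                = fun l : ℕ×ℕ => (-1:ℝ)^(l.1+l.2) * a (2*(l.1+1)*n₁ + j₁) (2*(l.2+1)*n₂ + j₂) := by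
              funext l
              simp only [vmap, hFdef, coefD_plus hn₁ hj₁ hj₁n, coefD_plus hn₂ hj₂ hj₂n]
              rw [show a (2*(l.1+1)*n₁ + j₁) (2*(l.2+1)*n₂ + j₂) * ((-1:ℝ)^(l.1+1) * (-1:ℝ)^(l.2+1))
                  = a (2*(l.1+1)*n₁ + j₁) (2*(l.2+1)*n₂ + j₂) * ((-1:ℝ)^(l.1+l.2)) from by rw [hpow2]]
              ring
            rw [e]
            exact hsT₁.hasSum
          · have e : (fun p : ℕ×ℕ => F (vmap n₁ j₁ (Sum.inr (Sum.inl p.1)), vmap n₂ j₂ (Sum.inr (Sum.inr p.2))))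
                = fun l : ℕ×ℕ => (-1:ℝ)^(l.1+l.2+1) * a (2*(l.1+1)*n₁ + j₁) (2*(l.2+1)*n₂ - j₂) := by
              funext l
              simp only [vmap, hFdef, coefD_plus hn₁ hj₁ hj₁n, coefD_minus hn₂ hj₂ hj₂n]
              rw [show a (2*(l.1+1)*n₁ + j₁) (2*(l.2+1)*n₂ - j₂) * ((-1:ℝ)^(l.1+1) * (-1:ℝ)^(l.2))
                  = a (2*(l.1+1)*n₁ + j₁) (2*(l.2+1)*n₂ - j₂) * ((-1:ℝ)^(l.1+l.2+1)) from by rw [hpow3]]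
              ring
            rw [e]
            exact hsT₂.hasSum
        · apply hasSum_prod_split_right
          · have e : (fun p : ℕ×ℕ => F (vmap n₁ j₁ (Sum.inr (Sum.inr p.1)), vmap n₂ j₂ (Sum.inr (Sum.inl p.2))))
                = fun l : ℕ×ℕ => (-1:ℝ)^(l.1+l.2+1) * a (2*(l.1+1)*n₁ - j₁) (2*(l.2+1)*n₂ + j₂) := by
              funext l
              simp only [vmap, hFdef, coefD_minus hn₁ hj₁ hj₁n, coefD_plus hn₂ hj₂ hj₂n]
              rw [show a (2*(l.1+1)*n₁ - j₁) (2*(l.2+1)*n₂ + j₂) * ((-1:ℝ)^(l.1) * (-1:ℝ)^(l.2+1))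
                  = a (2*(l.1+1)*n₁ - j₁) (2*(l.2+1)*n₂ + j₂) * ((-1:ℝ)^(l.1+l.2+1)) from by rw [hpow4]]
              ring
            rw [e]
            exact hsT₃.hasSum
          · have e : (fun p : ℕ×ℕ => F (vmap n₁ j₁ (Sum.inr (Sum.inr p.1)), vmap n₂ j₂ (Sum.inr (Sum.inr p.2))))
                = fun l : ℕ×ℕ => (-1:ℝ)^(l.1+l.2) * a (2*(l.1+1)*n₁ - j₁) (2*(l.2+1)*n₂ - j₂) := by
              funext l
              simp only [vmap, hFdef, coefD_minus hn₁ hj₁ hj₁n, coefD_minus hn₂ hj₂ hj₂n]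
              rw [show a (2*(l.1+1)*n₁ - j₁) (2*(l.2+1)*n₂ - j₂) * ((-1:ℝ)^(l.1) * (-1:ℝ)^(l.2))
                  = a (2*(l.1+1)*n₁ - j₁) (2*(l.2+1)*n₂ - j₂) * ((-1:ℝ)^(l.1+l.2)) from by rw [hpow5]]
              ring
            rw [e]
            exact hsT₄.hasSum
  -- lift to a HasSum for F over ℕ × ℕ
  have hinjV : Function.Injective (Prod.map (vmap n₁ j₁) (vmap n₂ j₂)) :=
    (vmap_inj hn₁ hj₁ hj₁n).prodMap (vmap_inj hn₂ hj₂ hj₂n)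
  have hsupp : ∀ m : ℕ × ℕ, m ∉ Set.range (Prod.map (vmap n₁ j₁) (vmap n₂ j₂)) → F m = 0 := by
    intro m hm
    by_contra hF0
    have hc1 : coefD n₁ j₁ m.1 ≠ 0 := by
      intro h
      exact hF0 (by simp only [hFdef, h, zero_mul, mul_zero])
    have hc2 : coefD n₂ j₂ m.2 ≠ 0 := by
      intro h
      exact hF0 (by simp only [hFdef, h, zero_mul, mul_zero])
    obtain ⟨o₁, ho₁⟩ := vmap_support hn₁ hj₁ hj₁n hc1
    obtain ⟨o₂, ho₂⟩ := vmap_support hn₂ hj₂ hj₂n hc2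
    exact hm ⟨(o₁, o₂), Prod.ext ho₁ ho₂⟩
  have hFhas := (hinjV.hasSum_iff hsupp).1 hTot
  -- bound for xi2
  have hxi : ∀ (p q : ℕ) (x y : ℝ), |xi2 p q x y| ≤ 2/π := by
    intro p q x y
    unfold xi2
    rw [abs_mul, abs_mul, abs_of_nonneg (by positivity : (0:ℝ) ≤ 2/π)]
    calc 2/π * |Real.sin (p*x)| * |Real.sin (q*y)| ≤ 2/π * 1 * 1 := by
          gcongr <;> exact Real.abs_sin_le_one _
    _ = 2/π := by ring
  have hgrid : ∀ k₁ k₂ : ℕ, Summable (fun m : ℕ×ℕ =>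
      a m.1 m.2 * xi2 m.1 m.2 (gridPt n₁ k₁) (gridPt n₂ k₂)
        * xi2 j₁ j₂ (gridPt n₁ k₁) (gridPt n₂ k₂)) := by
    intro k₁ k₂
    rw [← summable_abs_iff]
    refine Summable.of_nonneg_of_le (fun i => abs_nonneg _) (fun m => ?_)
      (hsum.mul_right ((2/π) * (2/π)))
    show |a m.1 m.2 * xi2 m.1 m.2 (gridPt n₁ k₁) (gridPt n₂ k₂)
        * xi2 j₁ j₂ (gridPt n₁ k₁) (gridPt n₂ k₂)| ≤ |a m.1 m.2| * ((2/π) * (2/π))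
    rw [abs_mul, abs_mul]
    have h1 := hxi m.1 m.2 (gridPt n₁ k₁) (gridPt n₂ k₂)
    have h2 := hxi j₁ j₂ (gridPt n₁ k₁) (gridPt n₂ k₂)
    calc |a m.1 m.2| * |xi2 m.1 m.2 (gridPt n₁ k₁) (gridPt n₂ k₂)|
          * |xi2 j₁ j₂ (gridPt n₁ k₁) (gridPt n₂ k₂)|
        ≤ |a m.1 m.2| * (2/π) * (2/π) := by
          gcongr <;> first
            | exact abs_nonneg _
            | exact h1
            | exact h2
    _ = |a m.1 m.2| * ((2/π) * (2/π)) := by ring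
  -- identify the left-hand side with the tsum of F
  have hlhs : (π ^ 2 / ((n₁:ℝ) * (n₂:ℝ))) *
      ∑ k₁ ∈ Finset.Icc 1 n₁, ∑ k₂ ∈ Finset.Icc 1 n₂,
        φ (gridPt n₁ k₁) (gridPt n₂ k₂) * xi2 j₁ j₂ (gridPt n₁ k₁) (gridPt n₂ k₂)
      = ∑' m : ℕ × ℕ, F m := by
    have step1 : ∑ k₁ ∈ Finset.Icc 1 n₁, ∑ k₂ ∈ Finset.Icc 1 n₂,
        φ (gridPt n₁ k₁) (gridPt n₂ k₂) * xi2 j₁ j₂ (gridPt n₁ k₁) (gridPt n₂ k₂)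
        = ∑' m : ℕ×ℕ, ∑ k₁ ∈ Finset.Icc 1 n₁, ∑ k₂ ∈ Finset.Icc 1 n₂,
            a m.1 m.2 * xi2 m.1 m.2 (gridPt n₁ k₁) (gridPt n₂ k₂)
              * xi2 j₁ j₂ (gridPt n₁ k₁) (gridPt n₂ k₂) := by
      calc ∑ k₁ ∈ Finset.Icc 1 n₁, ∑ k₂ ∈ Finset.Icc 1 n₂,
            φ (gridPt n₁ k₁) (gridPt n₂ k₂) * xi2 j₁ j₂ (gridPt n₁ k₁) (gridPt n₂ k₂)
          = ∑ k₁ ∈ Finset.Icc 1 n₁, ∑' m : ℕ×ℕ, ∑ k₂ ∈ Finset.Icc 1 n₂,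
              a m.1 m.2 * xi2 m.1 m.2 (gridPt n₁ k₁) (gridPt n₂ k₂)
                * xi2 j₁ j₂ (gridPt n₁ k₁) (gridPt n₂ k₂) := by
            refine Finset.sum_congr rfl fun k₁ _ => ?_
            rw [Summable.tsum_finsetSum (fun k₂ _ => hgrid k₁ k₂)]
            refine Finset.sum_congr rfl fun k₂ _ => ?_
            rw [hφ]
            exact tsum_mul_right.symm
        _ = _ := (Summable.tsum_finsetSum (fun k₁ _ => summable_sum (fun k₂ _ => hgrid k₁ k₂))).symm
    rw [step1, ← tsum_mul_left]
    refine tsum_congr fun m => ?_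
    have hpt : ∀ k₁ k₂ : ℕ,
        a m.1 m.2 * xi2 m.1 m.2 (gridPt n₁ k₁) (gridPt n₂ k₂)
          * xi2 j₁ j₂ (gridPt n₁ k₁) (gridPt n₂ k₂)
        = (a m.1 m.2 * (2/π) * (2/π)) *
          ((Real.sin (m.1 * gridPt n₁ k₁) * Real.sin (j₁ * gridPt n₁ k₁)) *
           (Real.sin (m.2 * gridPt n₂ k₂) * Real.sin (j₂ * gridPt n₂ k₂))) := by
      intro k₁ k₂; unfold xi2; ring
    have hfact : (a m.1 m.2 * (2/π) * (2/π)) *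
        ((∑ k₁ ∈ Finset.Icc 1 n₁, Real.sin (m.1 * gridPt n₁ k₁) * Real.sin (j₁ * gridPt n₁ k₁)) *
         (∑ k₂ ∈ Finset.Icc 1 n₂, Real.sin (m.2 * gridPt n₂ k₂) * Real.sin (j₂ * gridPt n₂ k₂)))
        = ∑ k₁ ∈ Finset.Icc 1 n₁, ∑ k₂ ∈ Finset.Icc 1 n₂,
            a m.1 m.2 * xi2 m.1 m.2 (gridPt n₁ k₁) (gridPt n₂ k₂)
              * xi2 j₁ j₂ (gridPt n₁ k₁) (gridPt n₂ k₂) := by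
      rw [Finset.sum_mul_sum, Finset.mul_sum]
      refine Finset.sum_congr rfl fun k₁ _ => ?_
      rw [Finset.mul_sum]
      exact Finset.sum_congr rfl fun k₂ _ => (hpt k₁ k₂).symm
    rw [← hfact, orth n₁ j₁ m.1 hn₁ hj₁ hj₁n, orth n₂ j₂ m.2 hn₂ hj₂ hj₂n]
    show _ = a m.1 m.2 * (coefD n₁ j₁ m.1 * coefD n₂ j₂ m.2)
    field_simp
  -- rewrite the right-hand side sums
  have hR₁ : (∑' l₂ : ℕ, (-1 : ℝ) ^ (l₂ + 1) *
        (a j₁ (2 * (l₂ + 1) * n₂ + j₂) - a j₁ (2 * (l₂ + 1) * n₂ - j₂)))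
      = (∑' l : ℕ, (-1:ℝ)^(l+1) * a j₁ (2*(l+1)*n₂ + j₂))
        + (∑' l : ℕ, (-1:ℝ)^l * a j₁ (2*(l+1)*n₂ - j₂)) := by
    rw [← Summable.tsum_add hsA₁ hsB₁]
    refine tsum_congr fun l => ?_
    rw [pow_succ]
    ring
  have hR₂ : (∑' l₁ : ℕ, (-1 : ℝ) ^ (l₁ + 1) *
        (a (2 * (l₁ + 1) * n₁ + j₁) j₂ - a (2 * (l₁ + 1) * n₁ - j₁) j₂))
      = (∑' l : ℕ, (-1:ℝ)^(l+1) * a (2*(l+1)*n₁ + j₁) j₂)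
        + (∑' l : ℕ, (-1:ℝ)^l * a (2*(l+1)*n₁ - j₁) j₂) := by
    rw [← Summable.tsum_add hsA₂ hsB₂]
    refine tsum_congr fun l => ?_
    rw [pow_succ]
    ring
  have hR₃ : (∑' l : ℕ × ℕ, (-1 : ℝ) ^ ((l.1 + 1) + (l.2 + 1)) *
          (a (2 * (l.1 + 1) * n₁ + j₁) (2 * (l.2 + 1) * n₂ + j₂)
            - a (2 * (l.1 + 1) * n₁ + j₁) (2 * (l.2 + 1) * n₂ - j₂)
            + a (2 * (l.1 + 1) * n₁ - j₁) (2 * (l.2 + 1) * n₂ - j₂)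
            - a (2 * (l.1 + 1) * n₁ - j₁) (2 * (l.2 + 1) * n₂ + j₂)))
      = ((∑' l : ℕ×ℕ, (-1:ℝ)^(l.1+l.2) * a (2*(l.1+1)*n₁ + j₁) (2*(l.2+1)*n₂ + j₂))
          + (∑' l : ℕ×ℕ, (-1:ℝ)^(l.1+l.2+1) * a (2*(l.1+1)*n₁ + j₁) (2*(l.2+1)*n₂ - j₂)))
        + ((∑' l : ℕ×ℕ, (-1:ℝ)^(l.1+l.2+1) * a (2*(l.1+1)*n₁ - j₁) (2*(l.2+1)*n₂ + j₂))
          + (∑' l : ℕ×ℕ, (-1:ℝ)^(l.1+l.2) * a (2*(l.1+1)*n₁ - j₁) (2*(l.2+1)*n₂ - j₂))) := by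
    rw [← Summable.tsum_add hsT₁ hsT₂, ← Summable.tsum_add hsT₃ hsT₄, ← Summable.tsum_add (hsT₁.add hsT₂) (hsT₃.add hsT₄)]
    refine tsum_congr fun l => ?_
    have hp : (-1:ℝ)^((l.1+1)+(l.2+1)) = (-1:ℝ)^(l.1+l.2) := by
      rw [show (l.1+1)+(l.2+1) = (l.1+l.2)+2 from by omega, pow_add]
      norm_num
    rw [hp, pow_succ]
    ring
  rw [hlhs, hFhas.tsum_eq, hR₁, hR₂, hR₃]
  ring
end

section
/- Let θ > 2 and let a = (a_{m₁,m₂})_{m₁,m₂ ≥ 1} be a family of reals with A² := ∑_{m₁,m₂ ≥ 1} (m₁²+m₂²)^θ a_{m₁,m₂}² < ∞. Set C₀ = 2∑_{l=1}^{∞} l^{−θ} + 4(∑_{l=1}^{∞} l^{−θ/2})². Then for all integers n₁, n₂ ≥ 1 and 1 ≤ j₁ < n₁, 1 ≤ j₂ < n₂, the aliasing sum Υ_{j₁,j₂} := ∑_{l₂=1}^{∞} (−1)^{l₂}(a_{j₁,2l₂n₂+j₂} − a_{j₁,2l₂n₂−j₂}) + ∑_{l₁=1}^{∞} (−1)^{l₁}(a_{2l₁n₁+j₁,j₂}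 − a_{2l₁n₁−j₁,j₂}) + ∑_{l₁=1}^{∞}∑_{l₂=1}^{∞} (−1)^{l₁+l₂}(a_{2l₁n₁+j₁,2l₂n₂+j₂} − a_{2l₁n₁+j₁,2l₂n₂−j₂} + a_{2l₁n₁−j₁,2l₂n₂−j₂} − a_{2l₁n₁−j₁,2l₂n₂+j₂}) converges absolutely and satisfies |Υ_{j₁,j₂}| ≤ C₀ (n₁^{−θ} + n₂^{−θ}) A. -/
open Real

set_option maxHeartbeats 2000000

theorem stmt_7 (θ : ℝ) (hθ : 2 < θ) (a : ℕ → ℕ → ℝ) (A : ℝ) (hA : 0 ≤ A)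
    (ha0 : ∀ m₁ m₂ : ℕ, m₁ = 0 ∨ m₂ = 0 → a m₁ m₂ = 0)
    (hsum : Summable fun m : ℕ × ℕ =>
      (((m.1 : ℝ) ^ 2 + (m.2 : ℝ) ^ 2) ^ θ) * (a m.1 m.2) ^ 2)
    (hA2 : (∑' m : ℕ × ℕ, (((m.1 : ℝ) ^ 2 + (m.2 : ℝ) ^ 2) ^ θ) * (a m.1 m.2) ^ 2) = A ^ 2)
    (n₁ n₂ j₁ j₂ : ℕ) (hn₁ : 1 ≤ n₁) (hn₂ : 1 ≤ n₂)
    (hj₁ : 1 ≤ j₁) (hj₁n : j₁ < n₁) (hj₂ : 1 ≤ j₂) (hj₂n : j₂ < n₂) :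
    (Summable fun l₂ : ℕ =>
        |(-1 : ℝ) ^ (l₂ + 1) *
          (a j₁ (2 * (l₂ + 1) * n₂ + j₂) - a j₁ (2 * (l₂ + 1) * n₂ - j₂))|) ∧
    (Summable fun l₁ : ℕ =>
        |(-1 : ℝ) ^ (l₁ + 1) *
          (a (2 * (l₁ + 1) * n₁ + j₁) j₂ - a (2 * (l₁ + 1) * n₁ - j₁) j₂)|) ∧
    (Summable fun l : ℕ × ℕ =>
        |(-1 : ℝ) ^ ((l.1 + 1) + (l.2 + 1)) *
          (a (2 * (l.1 + 1) * n₁ + j₁) (2 * (l.2 + 1) * n₂ + j₂)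
            - a (2 * (l.1 + 1) * n₁ + j₁) (2 * (l.2 + 1) * n₂ - j₂)
            + a (2 * (l.1 + 1) * n₁ - j₁) (2 * (l.2 + 1) * n₂ - j₂)
            - a (2 * (l.1 + 1) * n₁ - j₁) (2 * (l.2 + 1) * n₂ + j₂))|) ∧
    |(∑' l₂ : ℕ, (-1 : ℝ) ^ (l₂ + 1) *
          (a j₁ (2 * (l₂ + 1) * n₂ + j₂) - a j₁ (2 * (l₂ + 1) * n₂ - j₂)))
      + (∑' l₁ : ℕ, (-1 : ℝ) ^ (l₁ + 1) *
          (a (2 * (l₁ + 1) * n₁ + j₁) j₂ - a (2 * (l₁ + 1) * n₁ - j₁) j₂))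
      + ∑' l : ℕ × ℕ, (-1 : ℝ) ^ ((l.1 + 1) + (l.2 + 1)) *
          (a (2 * (l.1 + 1) * n₁ + j₁) (2 * (l.2 + 1) * n₂ + j₂)
            - a (2 * (l.1 + 1) * n₁ + j₁) (2 * (l.2 + 1) * n₂ - j₂)
            + a (2 * (l.1 + 1) * n₁ - j₁) (2 * (l.2 + 1) * n₂ - j₂)
            - a (2 * (l.1 + 1) * n₁ - j₁) (2 * (l.2 + 1) * n₂ + j₂))|
      ≤ (2 * (∑' l : ℕ, ((l : ℝ) + 1) ^ (-θ))
          + 4 * (∑' l : ℕ, ((l : ℝ) + 1) ^ (-(θ / 2))) ^ 2) *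
        ((n₁ : ℝ) ^ (-θ) + (n₂ : ℝ) ^ (-θ)) * A := by
  have hθ0 : (0:ℝ) < θ := by linarith
  have hn1R : (0:ℝ) < (n₁:ℝ) := by exact_mod_cast Nat.lt_of_lt_of_le Nat.zero_lt_one hn₁
  have hn2R : (0:ℝ) < (n₂:ℝ) := by exact_mod_cast Nat.lt_of_lt_of_le Nat.zero_lt_one hn₂
  -- single coefficient bound
  have hle : ∀ m₁ m₂ : ℕ, (((m₁ : ℝ) ^ 2 + (m₂ : ℝ) ^ 2) ^ θ) * (a m₁ m₂) ^ 2 ≤ A ^ 2 := by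
    intro m₁ m₂
    rw [← hA2]
    exact Summable.le_tsum hsum (m₁, m₂) fun j _ =>
      mul_nonneg (Real.rpow_nonneg (by positivity) _) (sq_nonneg _)
  have hkey : ∀ (m₁ m₂ : ℕ) (b : ℝ), 0 < b → b ≤ (m₁:ℝ)^2 + (m₂:ℝ)^2 →
      |a m₁ m₂| ≤ A * b ^ (-(θ/2)) := by
    intro m₁ m₂ b hb hble
    have h1 : b ^ θ * (a m₁ m₂)^2 ≤ A^2 := by
      refine le_trans ?_ (hle m₁ m₂)
      have := Real.rpow_le_rpow hb.le hble hθ0.le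
      nlinarith [sq_nonneg (a m₁ m₂)]
    have hbθ : 0 < b ^ θ := Real.rpow_pos_of_pos hb θ
    have hrw : (A * b ^ (-(θ/2)))^2 = A^2 * b^(-θ) := by
      rw [mul_pow, ← Real.rpow_natCast (b ^ (-(θ/2))) 2, ← Real.rpow_mul hb.le]
      norm_num
    have h2 : (a m₁ m₂)^2 ≤ (A * b ^ (-(θ/2)))^2 := by
      rw [hrw, Real.rpow_neg hb.le, ← div_eq_mul_inv, le_div_iff₀ hbθ]
      nlinarith
    calc |a m₁ m₂| = Real.sqrt ((a m₁ m₂)^2) := (Real.sqrt_sq_eq_abs _).symm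
      _ ≤ Real.sqrt ((A * b ^ (-(θ/2)))^2) := Real.sqrt_le_sqrt h2
      _ = A * b ^ (-(θ/2)) :=
        Real.sqrt_sq (mul_nonneg hA (Real.rpow_nonneg hb.le _))
  have hsq2 : ∀ x : ℝ, 0 ≤ x → ((x^2 : ℝ)) ^ (-(θ/2)) = x ^ (-θ) := by
    intro x hx
    rw [← Real.rpow_natCast x 2, ← Real.rpow_mul hx]
    norm_num
    congr 1
    ring
  -- index inequalities
  have hmge : ∀ (l n j : ℕ), 1 ≤ n → j < n →
      ((l+1) * n ≤ 2*(l+1)*n - j ∧ (l+1)*n ≤ 2*(l+1)*n + j) := by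
    intro l n j hn hj
    have h1 : j ≤ (l+1)*n := hj.le.trans (Nat.le_mul_of_pos_left n l.succ_pos)
    have h2 : 2*(l+1)*n = (l+1)*n + (l+1)*n := by ring
    omega
  -- coefficient bounds at shifted indices
  have hbound1 : ∀ (l m : ℕ), (l+1)*n₂ ≤ m →
      |a j₁ m| ≤ A * (((l:ℝ)+1)^(-θ) * (n₂:ℝ)^(-θ)) := by
    intro l m hm
    have hm' : ((l:ℝ)+1) * (n₂:ℝ) ≤ (m:ℝ) := by exact_mod_cast hm
    have hx : (0:ℝ) < ((l:ℝ)+1) * (n₂:ℝ) := by positivity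
    have hk := hkey j₁ m ((((l:ℝ)+1) * (n₂:ℝ))^2) (by positivity)
      (by nlinarith [mul_le_mul hm' hm' hx.le (hx.le.trans hm'), sq_nonneg ((j₁:ℝ))])
    rwa [hsq2 _ hx.le, Real.mul_rpow (by positivity) (by positivity)] at hk
  have hbound2 : ∀ (l m : ℕ), (l+1)*n₁ ≤ m →
      |a m j₂| ≤ A * (((l:ℝ)+1)^(-θ) * (n₁:ℝ)^(-θ)) := by
    intro l m hm
    have hm' : ((l:ℝ)+1) * (n₁:ℝ) ≤ (m:ℝ) := by exact_mod_cast hm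
    have hx : (0:ℝ) < ((l:ℝ)+1) * (n₁:ℝ) := by positivity
    have hk := hkey m j₂ ((((l:ℝ)+1) * (n₁:ℝ))^2) (by positivity)
      (by nlinarith [mul_le_mul hm' hm' hx.le (hx.le.trans hm'), sq_nonneg ((j₂:ℝ))])
    rwa [hsq2 _ hx.le, Real.mul_rpow (by positivity) (by positivity)] at hk
  have hbound3 : ∀ (l₁ l₂ m₁ m₂ : ℕ), (l₁+1)*n₁ ≤ m₁ → (l₂+1)*n₂ ≤ m₂ →
      |a m₁ m₂| ≤ A * ((((l₁:ℝ)+1)^(-(θ/2)) * (n₁:ℝ)^(-(θ/2))) *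
        (((l₂:ℝ)+1)^(-(θ/2)) * (n₂:ℝ)^(-(θ/2)))) := by
    intro l₁ l₂ m₁ m₂ h1 h2
    have h1' : ((l₁:ℝ)+1) * (n₁:ℝ) ≤ (m₁:ℝ) := by exact_mod_cast h1
    have h2' : ((l₂:ℝ)+1) * (n₂:ℝ) ≤ (m₂:ℝ) := by exact_mod_cast h2
    have hx1 : (0:ℝ) < ((l₁:ℝ)+1) * (n₁:ℝ) := by positivity
    have hx2 : (0:ℝ) < ((l₂:ℝ)+1) * (n₂:ℝ) := by positivity
    have hk := hkey m₁ m₂ ((((l₁:ℝ)+1) * (n₁:ℝ)) * (((l₂:ℝ)+1) * (n₂:ℝ))) (by positivity)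
      (by nlinarith [mul_le_mul h1' h2' hx2.le (hx1.le.trans h1'),
            sq_nonneg ((m₁:ℝ) - (m₂:ℝ)),
            mul_nonneg (hx1.le.trans h1') (hx2.le.trans h2')])
    rwa [Real.mul_rpow hx1.le hx2.le, Real.mul_rpow (by positivity) (by positivity),
      Real.mul_rpow (by positivity) (by positivity)] at hk
  -- summable comparison families
  have hTsum : Summable fun l : ℕ => ((l:ℝ)+1)^(-θ) := by
    have := (summable_nat_add_iff 1).2 (Real.summable_nat_rpow.2 (by linarith : -θ < -1))
    simpa using this
  have hSsum : Summable fun l : ℕ => ((l:ℝ)+1)^(-(θ/2)) := by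
    have := (summable_nat_add_iff 1).2 (Real.summable_nat_rpow.2 (by linarith : -(θ/2) < -1))
    simpa using this
  have hT0 : 0 ≤ ∑' l : ℕ, ((l:ℝ)+1)^(-θ) := tsum_nonneg fun l => by positivity
  have hS0 : 0 ≤ ∑' l : ℕ, ((l:ℝ)+1)^(-(θ/2)) := tsum_nonneg fun l => by positivity
  have hprodsum : Summable fun l : ℕ×ℕ =>
      (((l.1:ℝ)+1)^(-(θ/2))) * (((l.2:ℝ)+1)^(-(θ/2))) :=
    hSsum.mul_of_nonneg hSsum (fun l => by positivity) (fun l => by positivity)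
  -- termwise bounds
  have hterm1 : ∀ l : ℕ, |(-1:ℝ)^(l+1) *
      (a j₁ (2*(l+1)*n₂+j₂) - a j₁ (2*(l+1)*n₂-j₂))|
      ≤ (2*A*(n₂:ℝ)^(-θ)) * (((l:ℝ)+1)^(-θ)) := by
    intro l
    obtain ⟨hm1, hm2⟩ := hmge l n₂ j₂ hn₂ hj₂n
    have e1 := hbound1 l (2*(l+1)*n₂+j₂) hm2
    have e2 := hbound1 l (2*(l+1)*n₂-j₂) hm1
    rw [abs_mul, abs_pow, abs_neg, abs_one, one_pow, one_mul]
    calc |a j₁ (2*(l+1)*n₂+j₂) - a j₁ (2*(l+1)*n₂-j₂)|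
        ≤ |a j₁ (2*(l+1)*n₂+j₂)| + |a j₁ (2*(l+1)*n₂-j₂)| := abs_sub _ _
      _ ≤ (2*A*(n₂:ℝ)^(-θ)) * (((l:ℝ)+1)^(-θ)) := by nlinarith [e1, e2]
  have hterm2 : ∀ l : ℕ, |(-1:ℝ)^(l+1) *
      (a (2*(l+1)*n₁+j₁) j₂ - a (2*(l+1)*n₁-j₁) j₂)|
      ≤ (2*A*(n₁:ℝ)^(-θ)) * (((l:ℝ)+1)^(-θ)) := by
    intro l
    obtain ⟨hm1, hm2⟩ := hmge l n₁ j₁ hn₁ hj₁n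
    have e1 := hbound2 l (2*(l+1)*n₁+j₁) hm2
    have e2 := hbound2 l (2*(l+1)*n₁-j₁) hm1
    rw [abs_mul, abs_pow, abs_neg, abs_one, one_pow, one_mul]
    calc |a (2*(l+1)*n₁+j₁) j₂ - a (2*(l+1)*n₁-j₁) j₂|
        ≤ |a (2*(l+1)*n₁+j₁) j₂| + |a (2*(l+1)*n₁-j₁) j₂| := abs_sub _ _
      _ ≤ (2*A*(n₁:ℝ)^(-θ)) * (((l:ℝ)+1)^(-θ)) := by nlinarith [e1, e2]
  have hterm3 : ∀ l : ℕ×ℕ, |(-1:ℝ)^((l.1+1)+(l.2+1)) *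
      (a (2*(l.1+1)*n₁+j₁) (2*(l.2+1)*n₂+j₂)
        - a (2*(l.1+1)*n₁+j₁) (2*(l.2+1)*n₂-j₂)
        + a (2*(l.1+1)*n₁-j₁) (2*(l.2+1)*n₂-j₂)
        - a (2*(l.1+1)*n₁-j₁) (2*(l.2+1)*n₂+j₂))|
      ≤ (4*A*((n₁:ℝ)^(-(θ/2)) * (n₂:ℝ)^(-(θ/2)))) *
          ((((l.1:ℝ)+1)^(-(θ/2))) * (((l.2:ℝ)+1)^(-(θ/2)))) := by
    intro l
    obtain ⟨hp1, hp2⟩ := hmge l.1 n₁ j₁ hn₁ hj₁n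
    obtain ⟨hq1, hq2⟩ := hmge l.2 n₂ j₂ hn₂ hj₂n
    have e1 := hbound3 l.1 l.2 (2*(l.1+1)*n₁+j₁) (2*(l.2+1)*n₂+j₂) hp2 hq2
    have e2 := hbound3 l.1 l.2 (2*(l.1+1)*n₁+j₁) (2*(l.2+1)*n₂-j₂) hp2 hq1
    have e3 := hbound3 l.1 l.2 (2*(l.1+1)*n₁-j₁) (2*(l.2+1)*n₂-j₂) hp1 hq1
    have e4 := hbound3 l.1 l.2 (2*(l.1+1)*n₁-j₁) (2*(l.2+1)*n₂+j₂) hp1 hq2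
    rw [abs_mul, abs_pow, abs_neg, abs_one, one_pow, one_mul]
    set w := a (2*(l.1+1)*n₁+j₁) (2*(l.2+1)*n₂+j₂)
    set x := a (2*(l.1+1)*n₁+j₁) (2*(l.2+1)*n₂-j₂)
    set y := a (2*(l.1+1)*n₁-j₁) (2*(l.2+1)*n₂-j₂)
    set z := a (2*(l.1+1)*n₁-j₁) (2*(l.2+1)*n₂+j₂)
    have h4 : |w - x + y - z| ≤ |w| + |x| + |y| + |z| := by
      calc |w - x + y - z| = |(w - x) + (y - z)| := by congr 1; ring
        _ ≤ |w - x| + |y - z| := abs_add_le _ _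
        _ ≤ (|w| + |x|) + (|y| + |z|) := add_le_add (abs_sub _ _) (abs_sub _ _)
        _ = |w| + |x| + |y| + |z| := by ring
    refine h4.trans ?_
    nlinarith [e1, e2, e3, e4]
  -- summability of the three families
  have S1 : Summable fun l₂ : ℕ =>
      |(-1:ℝ)^(l₂+1) * (a j₁ (2*(l₂+1)*n₂+j₂) - a j₁ (2*(l₂+1)*n₂-j₂))| :=
    Summable.of_nonneg_of_le (fun l => abs_nonneg _) hterm1 (hTsum.mul_left _)
  have S2 : Summable fun l₁ : ℕ =>
      |(-1:ℝ)^(l₁+1) * (a (2*(l₁+1)*n₁+j₁) j₂ - a (2*(l₁+1)*n₁-j₁) j₂)| :=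
    Summable.of_nonneg_of_le (fun l => abs_nonneg _) hterm2 (hTsum.mul_left _)
  have S3 : Summable fun l : ℕ×ℕ =>
      |(-1:ℝ)^((l.1+1)+(l.2+1)) *
        (a (2*(l.1+1)*n₁+j₁) (2*(l.2+1)*n₂+j₂)
          - a (2*(l.1+1)*n₁+j₁) (2*(l.2+1)*n₂-j₂)
          + a (2*(l.1+1)*n₁-j₁) (2*(l.2+1)*n₂-j₂)
          - a (2*(l.1+1)*n₁-j₁) (2*(l.2+1)*n₂+j₂))| :=
    Summable.of_nonneg_of_le (fun l => abs_nonneg _) hterm3 (hprodsum.mul_left _)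
  refine ⟨S1, S2, S3, ?_⟩
  -- bounds on the three sums
  set T := ∑' l : ℕ, ((l:ℝ)+1)^(-θ) with hT
  set S := ∑' l : ℕ, ((l:ℝ)+1)^(-(θ/2)) with hS
  have hX : |∑' l₂ : ℕ, (-1:ℝ)^(l₂+1) *
      (a j₁ (2*(l₂+1)*n₂+j₂) - a j₁ (2*(l₂+1)*n₂-j₂))|
      ≤ (2*A*(n₂:ℝ)^(-θ)) * T := by
    have h1 := norm_tsum_le_tsum_norm (f := fun l₂ : ℕ => (-1:ℝ)^(l₂+1) *
      (a j₁ (2*(l₂+1)*n₂+j₂) - a j₁ (2*(l₂+1)*n₂-j₂))) (by simpa only [Real.norm_eq_abs] using S1)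
    rw [Real.norm_eq_abs] at h1
    refine h1.trans ?_
    calc ∑' l₂ : ℕ, ‖(-1:ℝ)^(l₂+1) *
        (a j₁ (2*(l₂+1)*n₂+j₂) - a j₁ (2*(l₂+1)*n₂-j₂))‖
        ≤ ∑' l : ℕ, (2*A*(n₂:ℝ)^(-θ)) * (((l:ℝ)+1)^(-θ)) := by
          refine Summable.tsum_le_tsum (fun l => ?_) (by simpa only [Real.norm_eq_abs] using S1)
            (hTsum.mul_left _)
          simpa only [Real.norm_eq_abs] using hterm1 l
      _ = (2*A*(n₂:ℝ)^(-θ)) * T := tsum_mul_left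
  have hY : |∑' l₁ : ℕ, (-1:ℝ)^(l₁+1) *
      (a (2*(l₁+1)*n₁+j₁) j₂ - a (2*(l₁+1)*n₁-j₁) j₂)|
      ≤ (2*A*(n₁:ℝ)^(-θ)) * T := by
    have h1 := norm_tsum_le_tsum_norm (f := fun l₁ : ℕ => (-1:ℝ)^(l₁+1) *
      (a (2*(l₁+1)*n₁+j₁) j₂ - a (2*(l₁+1)*n₁-j₁) j₂)) (by simpa only [Real.norm_eq_abs] using S2)
    rw [Real.norm_eq_abs] at h1
    refine h1.trans ?_
    calc ∑' l₁ : ℕ, ‖(-1:ℝ)^(l₁+1) *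
        (a (2*(l₁+1)*n₁+j₁) j₂ - a (2*(l₁+1)*n₁-j₁) j₂)‖
        ≤ ∑' l : ℕ, (2*A*(n₁:ℝ)^(-θ)) * (((l:ℝ)+1)^(-θ)) := by
          refine Summable.tsum_le_tsum (fun l => ?_) (by simpa only [Real.norm_eq_abs] using S2)
            (hTsum.mul_left _)
          simpa only [Real.norm_eq_abs] using hterm2 l
      _ = (2*A*(n₁:ℝ)^(-θ)) * T := tsum_mul_left
  have hprodeq : (∑' l : ℕ×ℕ, (((l.1:ℝ)+1)^(-(θ/2))) * (((l.2:ℝ)+1)^(-(θ/2)))) = S^2 := by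
    have h2 : ∀ b : ℕ, Summable fun c : ℕ => ((b:ℝ)+1)^(-(θ/2)) * ((c:ℝ)+1)^(-(θ/2)) :=
      fun b => hSsum.mul_left _
    rw [Summable.tsum_prod' (f := fun l : ℕ×ℕ => (((l.1:ℝ)+1)^(-(θ/2))) * (((l.2:ℝ)+1)^(-(θ/2)))) hprodsum h2]
    simp only [tsum_mul_left]
    rw [tsum_mul_right, ← hS, sq]
  have hZ : |∑' l : ℕ×ℕ, (-1:ℝ)^((l.1+1)+(l.2+1)) *
      (a (2*(l.1+1)*n₁+j₁) (2*(l.2+1)*n₂+j₂)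
        - a (2*(l.1+1)*n₁+j₁) (2*(l.2+1)*n₂-j₂)
        + a (2*(l.1+1)*n₁-j₁) (2*(l.2+1)*n₂-j₂)
        - a (2*(l.1+1)*n₁-j₁) (2*(l.2+1)*n₂+j₂))|
      ≤ (4*A*((n₁:ℝ)^(-(θ/2)) * (n₂:ℝ)^(-(θ/2)))) * S^2 := by
    have h1 := norm_tsum_le_tsum_norm (f := fun l : ℕ×ℕ => (-1:ℝ)^((l.1+1)+(l.2+1)) *
      (a (2*(l.1+1)*n₁+j₁) (2*(l.2+1)*n₂+j₂)
        - a (2*(l.1+1)*n₁+j₁) (2*(l.2+1)*n₂-j₂)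
        + a (2*(l.1+1)*n₁-j₁) (2*(l.2+1)*n₂-j₂)
        - a (2*(l.1+1)*n₁-j₁) (2*(l.2+1)*n₂+j₂))) (by simpa only [Real.norm_eq_abs] using S3)
    rw [Real.norm_eq_abs] at h1
    refine h1.trans ?_
    have h2 : ∑' l : ℕ×ℕ, ‖(-1:ℝ)^((l.1+1)+(l.2+1)) *
        (a (2*(l.1+1)*n₁+j₁) (2*(l.2+1)*n₂+j₂)
          - a (2*(l.1+1)*n₁+j₁) (2*(l.2+1)*n₂-j₂)
          + a (2*(l.1+1)*n₁-j₁) (2*(l.2+1)*n₂-j₂)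
          - a (2*(l.1+1)*n₁-j₁) (2*(l.2+1)*n₂+j₂))‖
        ≤ ∑' l : ℕ×ℕ, (4*A*((n₁:ℝ)^(-(θ/2)) * (n₂:ℝ)^(-(θ/2)))) *
            ((((l.1:ℝ)+1)^(-(θ/2))) * (((l.2:ℝ)+1)^(-(θ/2)))) := by
      refine Summable.tsum_le_tsum (fun l => ?_) (by simpa only [Real.norm_eq_abs] using S3)
        (hprodsum.mul_left _)
      simpa only [Real.norm_eq_abs] using hterm3 l
    rwa [tsum_mul_left, hprodeq] at h2
  -- combine
  have habs3 := abs_add_three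
    (∑' l₂ : ℕ, (-1:ℝ)^(l₂+1) * (a j₁ (2*(l₂+1)*n₂+j₂) - a j₁ (2*(l₂+1)*n₂-j₂)))
    (∑' l₁ : ℕ, (-1:ℝ)^(l₁+1) * (a (2*(l₁+1)*n₁+j₁) j₂ - a (2*(l₁+1)*n₁-j₁) j₂))
    (∑' l : ℕ×ℕ, (-1:ℝ)^((l.1+1)+(l.2+1)) *
      (a (2*(l.1+1)*n₁+j₁) (2*(l.2+1)*n₂+j₂)
        - a (2*(l.1+1)*n₁+j₁) (2*(l.2+1)*n₂-j₂)
        + a (2*(l.1+1)*n₁-j₁) (2*(l.2+1)*n₂-j₂)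
        - a (2*(l.1+1)*n₁-j₁) (2*(l.2+1)*n₂+j₂)))
  have hp2 : (n₁:ℝ)^(-(θ/2)) * (n₁:ℝ)^(-(θ/2)) = (n₁:ℝ)^(-θ) := by
    rw [← Real.rpow_add hn1R]; ring_nf
  have hq2 : (n₂:ℝ)^(-(θ/2)) * (n₂:ℝ)^(-(θ/2)) = (n₂:ℝ)^(-θ) := by
    rw [← Real.rpow_add hn2R]; ring_nf
  have hpq : (n₁:ℝ)^(-(θ/2)) * (n₂:ℝ)^(-(θ/2)) ≤ (n₁:ℝ)^(-θ) + (n₂:ℝ)^(-θ) := by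
    nlinarith [sq_nonneg ((n₁:ℝ)^(-(θ/2)) - (n₂:ℝ)^(-(θ/2))),
      Real.rpow_nonneg hn1R.le (-(θ/2)), Real.rpow_nonneg hn2R.le (-(θ/2))]
  have hZ' : |∑' l : ℕ×ℕ, (-1:ℝ)^((l.1+1)+(l.2+1)) *
      (a (2*(l.1+1)*n₁+j₁) (2*(l.2+1)*n₂+j₂)
        - a (2*(l.1+1)*n₁+j₁) (2*(l.2+1)*n₂-j₂)
        + a (2*(l.1+1)*n₁-j₁) (2*(l.2+1)*n₂-j₂)
        - a (2*(l.1+1)*n₁-j₁) (2*(l.2+1)*n₂+j₂))|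
      ≤ (4*A*((n₁:ℝ)^(-θ) + (n₂:ℝ)^(-θ))) * S^2 := by
    refine hZ.trans (mul_le_mul_of_nonneg_right ?_ (sq_nonneg S))
    have h4A : (0:ℝ) ≤ 4*A := by linarith
    exact mul_le_mul_of_nonneg_left hpq h4A
  have hfinal := add_le_add (add_le_add hX hY) hZ'
  refine le_trans (le_trans habs3 hfinal) (le_of_eq (by ring))
end

section
/- Let n₁, n₂ ≥ 1 and 1 ≤ N₁ < n₁, 1 ≤ N₂ < n₂ be integers. Let (W_{k₁,k₂})_{1 ≤ k₁ ≤ n₁, 1 ≤ k₂ ≤ n₂} be mutually independent random variables on a probability space, each with the standard normal distribution N(0,1), and let ε_{k₁,k₂} be real numbers with |ε_{k₁,k₂}| ≤ ε_max. Then E[ ∑_{j₁=1}^{N₁} ∑_{j₂=1}^{N₂} ( (π²/(n₁n₂)) ∑_{k₁=1}^{n₁} ∑_{k₂=1}^{n₂} ε_{k₁,k₂} W_{k₁,k₂} ξ_{j₁,j₂}(x_{k₁,k₂}) )² ] ≤ π² N₁ N₂ ε_max² / (n₁ n₂). -/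
open Real MeasureTheory ProbabilityTheory
open scoped ENNReal NNReal

lemma gauss_pdf_eq (x : ℝ) :
    gaussianPDFReal 0 1 x = (√(2 * π))⁻¹ * rexp (-(2⁻¹) * x ^ 2) := by
  rw [gaussianPDFReal]
  norm_num
  left
  ring_nf

lemma gauss_withDensity :
    gaussianReal 0 1 = volume.withDensity (fun x => ((gaussianPDFReal 0 1 x).toNNReal : ℝ≥0∞)) := by
  rw [gaussianReal_of_var_ne_zero _ one_ne_zero]
  rfl

lemma integral_gauss (f : ℝ → ℝ) :
    ∫ x, f x ∂(gaussianReal 0 1) = ∫ x, gaussianPDFReal 0 1 x * f x := by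
  rw [gauss_withDensity, integral_withDensity_eq_integral_smul
    ((measurable_gaussianPDFReal 0 1).real_toNNReal) f]
  congr 1; ext x
  rw [NNReal.smul_def, Real.coe_toNNReal _ (gaussianPDFReal_nonneg 0 1 x), smul_eq_mul]

lemma integrable_sq_exp : Integrable (fun x : ℝ => x ^ 2 * rexp (-(2⁻¹) * x ^ 2)) := by
  have := integrable_rpow_mul_exp_neg_mul_sq (b := 2⁻¹) (by norm_num) (s := 2) (by norm_num)
  refine this.congr (Filter.Eventually.of_forall fun x => ?_)
  show x ^ ((2:ℕ):ℝ) * _ = _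
  rw [Real.rpow_natCast]

lemma integral_sq_exp : ∫ x : ℝ, x ^ 2 * rexp (-(2⁻¹) * x ^ 2) = √(2 * π) := by
  have hu : ∀ x : ℝ, HasDerivAt (fun y : ℝ => y) 1 x := fun x => hasDerivAt_id x
  have hv : ∀ x : ℝ, HasDerivAt (fun y : ℝ => -rexp (-(2⁻¹) * y ^ 2))
      (x * rexp (-(2⁻¹) * x ^ 2)) x := by
    intro x
    have h1 : HasDerivAt (fun y : ℝ => -(2⁻¹) * y ^ 2) (-(2⁻¹) * (2 * x)) x := by
      have := (hasDerivAt_pow 2 x).const_mul (-(2:ℝ)⁻¹)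
      exact this.congr_deriv (by norm_num)
    have := (h1.exp).neg
    exact this.congr_deriv (by ring)
  have huv' : Integrable (fun x : ℝ => x * (x * rexp (-(2⁻¹) * x ^ 2))) :=
    integrable_sq_exp.congr (Filter.Eventually.of_forall fun x => by ring)
  have hu'v : Integrable (fun x : ℝ => 1 * -rexp (-(2⁻¹) * x ^ 2)) := by
    have := integrable_exp_neg_mul_sq (b := 2⁻¹) (by norm_num)
    refine this.neg.congr (Filter.Eventually.of_forall fun x => ?_)
    simp only [Pi.neg_apply]; norm_num
  have huv : Integrable (fun x : ℝ => x * -rexp (-(2⁻¹) * x ^ 2)) := by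
    have := integrable_mul_exp_neg_mul_sq (b := 2⁻¹) (by norm_num)
    refine this.neg.congr (Filter.Eventually.of_forall fun x => ?_)
    simp only [Pi.neg_apply]; norm_num
  have key := integral_mul_deriv_eq_deriv_mul_of_integrable (fun x _ => hu x) (fun x _ => hv x) huv' hu'v huv
  have h2 : ∫ x : ℝ, x * (x * rexp (-(2⁻¹) * x ^ 2)) = ∫ x : ℝ, x ^ 2 * rexp (-(2⁻¹) * x ^ 2) := by
    congr 1; ext x; ring
  rw [h2] at key
  rw [key]
  have : ∫ x : ℝ, (1:ℝ) * -rexp (-(2⁻¹) * x ^ 2) = -∫ x : ℝ, rexp (-(2⁻¹) * x ^ 2) := by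
    rw [← integral_neg]; congr 1; ext x; ring
  rw [this, neg_neg, integral_gaussian]
  rw [show π / 2⁻¹ = 2 * π by ring]

lemma gauss_mean : ∫ x, x ∂(gaussianReal 0 1) = 0 := by
  rw [integral_gauss]
  have h := integral_neg_eq_self (fun x : ℝ => gaussianPDFReal 0 1 x * x) volume
  have hodd : ∀ x : ℝ, gaussianPDFReal 0 1 (-x) * (-x) = -(gaussianPDFReal 0 1 x * x) := by
    intro x
    rw [gauss_pdf_eq, gauss_pdf_eq]
    ring_nf
  rw [show (fun x : ℝ => gaussianPDFReal 0 1 (-x) * (-x)) = fun x => -(gaussianPDFReal 0 1 x * x)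
    from funext hodd] at h
  rw [integral_neg] at h
  linarith [h]

lemma gauss_second_moment : ∫ x, x ^ 2 ∂(gaussianReal 0 1) = 1 := by
  rw [integral_gauss]
  have : ∀ x : ℝ, gaussianPDFReal 0 1 x * x ^ 2 = (√(2 * π))⁻¹ * (x ^ 2 * rexp (-(2⁻¹) * x ^ 2)) := by
    intro x; rw [gauss_pdf_eq]; ring
  rw [show (fun x : ℝ => gaussianPDFReal 0 1 x * x ^ 2)
      = fun x => (√(2 * π))⁻¹ * (x ^ 2 * rexp (-(2⁻¹) * x ^ 2)) from funext this,
    integral_const_mul, integral_sq_exp, inv_mul_cancel₀]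
  positivity

lemma gauss_integrable_sq : Integrable (fun x : ℝ => x ^ 2) (gaussianReal 0 1) := by
  rw [gauss_withDensity]
  rw [integrable_withDensity_iff ((measurable_gaussianPDFReal 0 1).real_toNNReal.coe_nnreal_ennreal)
    (Filter.Eventually.of_forall fun x => ENNReal.coe_lt_top)]
  simp only [ENNReal.coe_toReal]
  have : ∀ x : ℝ, x ^ 2 * ((gaussianPDFReal 0 1 x).toNNReal : ℝ)
      = (√(2 * π))⁻¹ * (x ^ 2 * rexp (-(2⁻¹) * x ^ 2)) := by
    intro x
    rw [Real.coe_toNNReal _ (gaussianPDFReal_nonneg 0 1 x), gauss_pdf_eq]; ring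
  rw [show (fun x : ℝ => x ^ 2 * ((gaussianPDFReal 0 1 x).toNNReal : ℝ))
      = fun x => (√(2 * π))⁻¹ * (x ^ 2 * rexp (-(2⁻¹) * x ^ 2)) from funext this]
  exact integrable_sq_exp.const_mul _

lemma gauss_memLp : MemLp (id : ℝ → ℝ) 2 (gaussianReal 0 1) := by
  rw [memLp_two_iff_integrable_sq aestronglyMeasurable_id]
  exact gauss_integrable_sq.congr (Filter.Eventually.of_forall fun x => by simp [sq])

section RV
variable {Ω : Type*} [MeasureSpace Ω] [IsProbabilityMeasure (ℙ : Measure Ω)]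

lemma W_memLp {X : Ω → ℝ} (hm : Measurable X) (hg : Measure.map X ℙ = gaussianReal 0 1) :
    MemLp X 2 ℙ := by
  have h := gauss_memLp
  rw [← hg] at h
  exact (memLp_map_measure_iff aestronglyMeasurable_id hm.aemeasurable).1 h

lemma W_mean {X : Ω → ℝ} (hm : Measurable X) (hg : Measure.map X ℙ = gaussianReal 0 1) :
    ∫ ω, X ω ∂ℙ = 0 := by
  have h := integral_map hm.aemeasurable (aestronglyMeasurable_id (μ := Measure.map X ℙ))
  rw [hg] at h
  calc ∫ ω, X ω ∂ℙ = ∫ ω, id (X ω) ∂ℙ := rfl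
    _ = 0 := by rw [← h]; exact gauss_mean

lemma W_sq {X : Ω → ℝ} (hm : Measurable X) (hg : Measure.map X ℙ = gaussianReal 0 1) :
    ∫ ω, X ω ^ 2 ∂ℙ = 1 := by
  have h := integral_map (μ := (ℙ : Measure Ω)) (φ := X) (f := fun x : ℝ => x ^ 2) hm.aemeasurable
    (measurable_id.pow_const 2).aestronglyMeasurable
  rw [hg] at h
  rw [← h]
  exact gauss_second_moment

lemma W_var {X : Ω → ℝ} (hm : Measurable X) (hg : Measure.map X ℙ = gaussianReal 0 1) :
    variance X ℙ = 1 := by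
  rw [variance_eq_sub (W_memLp hm hg)]
  have h1 : (ℙ : Measure Ω)[X ^ 2] = 1 := by
    rw [show (X ^ 2 : Ω → ℝ) = fun ω => X ω ^ 2 from rfl]
    exact W_sq hm hg
  rw [h1, W_mean hm hg]
  norm_num

lemma expectation_sq_sum {ι : Type*} [Fintype ι]
    (W : ι → Ω → ℝ) (hWmeas : ∀ k, Measurable (W k))
    (hWindep : iIndepFun W ℙ)
    (hWgauss : ∀ k, Measure.map (W k) ℙ = gaussianReal 0 1)
    (a : ι → ℝ) :
    ∫ ω, (∑ k, a k * W k ω) ^ 2 ∂ℙ = ∑ k, (a k) ^ 2 := by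
  set X : ι → Ω → ℝ := fun k ω => a k * W k ω with hX
  have hXm : ∀ k, MemLp (X k) 2 ℙ := fun k => (W_memLp (hWmeas k) (hWgauss k)).const_mul (a k)
  have hS : MemLp (∑ k, X k) 2 ℙ := memLp_finset_sum' _ (fun k _ => hXm k)
  have hpair : Set.Pairwise ↑(Finset.univ : Finset ι) (fun i j => IndepFun (X i) (X j) ℙ) := by
    intro i _ j _ hij
    exact (hWindep.indepFun hij).comp (measurable_const_mul (a i)) (measurable_const_mul (a j))
  have hvar := IndepFun.variance_sum (fun k _ => hXm k) hpair
  have hVX : ∀ k, variance (X k) ℙ = a k ^ 2 := by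
    intro k
    rw [hX]
    rw [variance_const_mul (a k) (W k) ℙ, W_var (hWmeas k) (hWgauss k), mul_one]
  have hES : (ℙ : Measure Ω)[∑ k, X k] = 0 := by
    have he : (ℙ : Measure Ω)[∑ k, X k] = ∫ ω, ∑ k, X k ω ∂ℙ := by
      congr 1; ext ω; simp [Finset.sum_apply]
    rw [he, integral_finset_sum _ (fun k _ => (hXm k).integrable one_le_two)]
    refine Finset.sum_eq_zero fun k _ => ?_
    have : ∫ ω, X k ω ∂ℙ = a k * ∫ ω, W k ω ∂ℙ := by
      rw [hX]; exact integral_const_mul _ _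
    rw [this, W_mean (hWmeas k) (hWgauss k), mul_zero]
  have hdef := variance_eq_sub hS
  rw [hvar, hES] at hdef
  have h2 : (ℙ : Measure Ω)[(∑ k, X k) ^ 2] = ∫ ω, (∑ k, a k * W k ω) ^ 2 ∂ℙ := by
    congr 1; ext ω; simp [hX, Finset.sum_apply]
  rw [h2] at hdef
  have h3 : ∑ k, variance (X k) ℙ = ∑ k, a k ^ 2 := Finset.sum_congr rfl fun k _ => hVX k
  rw [h3] at hdef
  linarith [hdef]

end RV



lemma sum_cos_odd {n j : ℕ} (hj1 : 1 ≤ j) (hjn : j < n) :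
    ∑ k ∈ Finset.range n, Real.cos ((2 * (k : ℝ) + 1) * ((j : ℝ) * π / n)) = 0 := by
  have hn0 : 0 < n := by omega
  have hn : (0:ℝ) < n := by exact_mod_cast hn0
  have hnC : (n:ℂ) ≠ 0 := by exact_mod_cast hn0.ne'
  set θ : ℝ := (j : ℝ) * π / n with hθ
  set z : ℂ := Complex.exp (θ * Complex.I) with hz
  have hz2n : z ^ (2 * n) = 1 := by
    rw [hz, ← Complex.exp_nat_mul]
    have : (↑(2 * n) : ℂ) * (θ * Complex.I) = (j : ℤ) * (2 * π * Complex.I) := by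
      push_cast [hθ]
      field_simp
    rw [this, Complex.exp_int_mul_two_pi_mul_I]
  have hz2 : z ^ 2 ≠ 1 := by
    rw [hz, ← Complex.exp_nat_mul]
    intro h
    rw [Complex.exp_eq_one_iff] at h
    obtain ⟨m, hm⟩ := h
    have hre : (2 : ℝ) * θ = m * (2 * π) := by
      have h2 := congrArg Complex.im hm
      push_cast at h2
      simpa using h2
    have hθpos : 0 < θ := by positivity
    have hθlt : θ < π := by
      rw [hθ]
      rw [div_lt_iff₀ hn]
      have : (j : ℝ) < n := by exact_mod_cast hjn
      nlinarith [Real.pi_pos]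
    have hm0 : (0:ℝ) < m := by nlinarith [Real.pi_pos]
    have hm1 : (m:ℝ) < 1 := by nlinarith [Real.pi_pos]
    have : (0:ℤ) < m := by exact_mod_cast hm0
    have : m < 1 := by exact_mod_cast hm1
    omega
  have hsum : ∑ k ∈ Finset.range n, z ^ (2 * k + 1) = 0 := by
    have h1 : ∀ k, z ^ (2 * k + 1) = z * (z ^ 2) ^ k := by
      intro k; rw [pow_succ, pow_mul]; ring
    simp_rw [h1]
    rw [← Finset.mul_sum, geom_sum_eq hz2, ← pow_mul]
    rw [mul_comm 2 n, mul_comm n 2, hz2n]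
    simp
  have hre : ∀ k : ℕ, Real.cos ((2 * (k : ℝ) + 1) * θ) = (z ^ (2 * k + 1)).re := by
    intro k
    rw [hz, ← Complex.exp_nat_mul]
    have : (↑(2 * k + 1) : ℂ) * (θ * Complex.I) = ((((2 * (k:ℝ) + 1) * θ) : ℝ) : ℂ) * Complex.I := by
      push_cast; ring
    rw [this, Complex.exp_ofReal_mul_I_re]
  calc ∑ k ∈ Finset.range n, Real.cos ((2 * (k : ℝ) + 1) * θ)
      = ∑ k ∈ Finset.range n, (z ^ (2 * k + 1)).re := Finset.sum_congr rfl fun k _ => hre k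
    _ = (∑ k ∈ Finset.range n, z ^ (2 * k + 1)).re := by rw [Complex.re_sum]
    _ = 0 := by rw [hsum]; rfl

lemma sum_sin_sq {n j : ℕ} (hj1 : 1 ≤ j) (hjn : j < n) :
    ∑ k : Fin n, Real.sin ((j : ℝ) * gridPt n (k.val + 1)) ^ 2 = n / 2 := by
  have hn0 : 0 < n := by omega
  have hn : (0:ℝ) < n := by exact_mod_cast hn0
  have harg : ∀ k : Fin n, (j : ℝ) * gridPt n (k.val + 1)
      = ((2 * (k.val : ℝ) + 1) * ((j : ℝ) * π / n)) / 2 := by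
    intro k
    rw [gridPt]
    push_cast
    field_simp
    ring
  have hs : ∀ k : Fin n, Real.sin ((j : ℝ) * gridPt n (k.val + 1)) ^ 2
      = 1 / 2 - Real.cos ((2 * (k.val : ℝ) + 1) * ((j : ℝ) * π / n)) / 2 := by
    intro k
    rw [harg k, Real.sin_sq_eq_half_sub]
    congr 2
    rw [mul_div_cancel₀]
    norm_num
  rw [Finset.sum_congr rfl fun k _ => hs k]
  rw [Finset.sum_sub_distrib, Finset.sum_const, Finset.card_univ, Fintype.card_fin]
  have := sum_cos_odd hj1 hjn
  rw [← Finset.sum_div, Fin.sum_univ_eq_sum_range (fun k => Real.cos ((2 * (k:ℝ) + 1) * ((j:ℝ) * π / n)))]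
  rw [this]
  simp
  ring



lemma sum_xi2_sq {n₁ n₂ j₁ j₂ : ℕ} (h₁ : 1 ≤ j₁) (h₁n : j₁ < n₁) (h₂ : 1 ≤ j₂) (h₂n : j₂ < n₂) :
    ∑ k : Fin n₁ × Fin n₂,
      xi2 j₁ j₂ (gridPt n₁ (k.1.val + 1)) (gridPt n₂ (k.2.val + 1)) ^ 2
      = (n₁ * n₂ : ℝ) / π ^ 2 := by
  have hπ : (0:ℝ) < π := Real.pi_pos
  have hexp : ∀ k : Fin n₁ × Fin n₂,
      xi2 j₁ j₂ (gridPt n₁ (k.1.val + 1)) (gridPt n₂ (k.2.val + 1)) ^ 2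
      = (4 / π ^ 2) * (Real.sin ((j₁:ℝ) * gridPt n₁ (k.1.val + 1)) ^ 2
          * Real.sin ((j₂:ℝ) * gridPt n₂ (k.2.val + 1)) ^ 2) := by
    intro k; rw [xi2]; field_simp; ring
  rw [Finset.sum_congr rfl fun k _ => hexp k, ← Finset.mul_sum]
  rw [Fintype.sum_prod_type]
  have : ∑ k₁ : Fin n₁, ∑ k₂ : Fin n₂,
      Real.sin ((j₁:ℝ) * gridPt n₁ (k₁.val + 1)) ^ 2 * Real.sin ((j₂:ℝ) * gridPt n₂ (k₂.val + 1)) ^ 2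
      = (∑ k₁ : Fin n₁, Real.sin ((j₁:ℝ) * gridPt n₁ (k₁.val + 1)) ^ 2)
        * (∑ k₂ : Fin n₂, Real.sin ((j₂:ℝ) * gridPt n₂ (k₂.val + 1)) ^ 2) := by
    rw [Finset.sum_mul_sum]
  rw [this, sum_sin_sq h₁ h₁n, sum_sin_sq h₂ h₂n]
  field_simp
  ring


theorem stmt_9 (n₁ n₂ N₁ N₂ : ℕ)
    (hN₁ : 1 ≤ N₁) (hN₁n : N₁ < n₁) (hN₂ : 1 ≤ N₂) (hN₂n : N₂ < n₂)
    {Ω : Type*} [MeasureSpace Ω] [IsProbabilityMeasure (ℙ : Measure Ω)]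
    (W : Fin n₁ × Fin n₂ → Ω → ℝ)
    (hWmeas : ∀ k, Measurable (W k))
    (hWindep : iIndepFun W ℙ)
    (hWgauss : ∀ k, Measure.map (W k) ℙ = gaussianReal 0 1)
    (ε : Fin n₁ × Fin n₂ → ℝ) (εmax : ℝ) (hε : ∀ k, |ε k| ≤ εmax) :
    ∫ ω, ∑ j₁ ∈ Finset.Icc 1 N₁, ∑ j₂ ∈ Finset.Icc 1 N₂,
        ((π ^ 2 / (n₁ * n₂)) * ∑ k : Fin n₁ × Fin n₂,
            ε k * W k ω *
              xi2 j₁ j₂ (gridPt n₁ (k.1.val + 1)) (gridPt n₂ (k.2.val + 1))) ^ 2 ∂ℙ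
      ≤ π ^ 2 * N₁ * N₂ * εmax ^ 2 / (n₁ * n₂) := by
  have hπ : (0:ℝ) < π := Real.pi_pos
  have hn₁ : 0 < n₁ := by omega
  have hn₂ : 0 < n₂ := by omega
  have hn₁R : (0:ℝ) < n₁ := by exact_mod_cast hn₁
  have hn₂R : (0:ℝ) < n₂ := by exact_mod_cast hn₂
  set C : ℝ := π ^ 2 / (n₁ * n₂) with hC
  set a : ℕ → ℕ → Fin n₁ × Fin n₂ → ℝ := fun j₁ j₂ k =>
    C * (ε k * xi2 j₁ j₂ (gridPt n₁ (k.1.val + 1)) (gridPt n₂ (k.2.val + 1))) with ha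
  -- rewrite integrand
  have hrw : ∀ (j₁ j₂ : ℕ) (ω : Ω),
      (C * ∑ k : Fin n₁ × Fin n₂,
          ε k * W k ω * xi2 j₁ j₂ (gridPt n₁ (k.1.val + 1)) (gridPt n₂ (k.2.val + 1))) ^ 2
      = (∑ k : Fin n₁ × Fin n₂, a j₁ j₂ k * W k ω) ^ 2 := by
    intro j₁ j₂ ω
    rw [Finset.mul_sum]
    congr 1
    exact Finset.sum_congr rfl fun k _ => by rw [ha]; ring
  have hmem : ∀ (j₁ j₂ : ℕ), MemLp (fun ω => ∑ k : Fin n₁ × Fin n₂, a j₁ j₂ k * W k ω) 2 ℙ := by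
    intro j₁ j₂
    have : (fun ω => ∑ k : Fin n₁ × Fin n₂, a j₁ j₂ k * W k ω)
        = ∑ k : Fin n₁ × Fin n₂, (fun ω => a j₁ j₂ k * W k ω) := by
      ext ω; simp [Finset.sum_apply]
    rw [this]
    exact memLp_finset_sum' _ fun k _ => (W_memLp (hWmeas k) (hWgauss k)).const_mul _
  have hint : ∀ (j₁ j₂ : ℕ), Integrable (fun ω =>
      (C * ∑ k : Fin n₁ × Fin n₂,
          ε k * W k ω * xi2 j₁ j₂ (gridPt n₁ (k.1.val + 1)) (gridPt n₂ (k.2.val + 1))) ^ 2) ℙ := by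
    intro j₁ j₂
    have := (hmem j₁ j₂).integrable_sq
    exact this.congr (Filter.Eventually.of_forall fun ω => (hrw j₁ j₂ ω).symm)
  -- swap integral and sums
  rw [integral_finset_sum _ (fun j₁ _ => integrable_finset_sum _ (fun j₂ _ => hint j₁ j₂))]
  have hswap : ∀ j₁ ∈ Finset.Icc 1 N₁,
      (∫ ω, ∑ j₂ ∈ Finset.Icc 1 N₂,
        (C * ∑ k : Fin n₁ × Fin n₂,
            ε k * W k ω * xi2 j₁ j₂ (gridPt n₁ (k.1.val + 1)) (gridPt n₂ (k.2.val + 1))) ^ 2 ∂ℙ)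
      = ∑ j₂ ∈ Finset.Icc 1 N₂, ∫ ω,
        (C * ∑ k : Fin n₁ × Fin n₂,
            ε k * W k ω * xi2 j₁ j₂ (gridPt n₁ (k.1.val + 1)) (gridPt n₂ (k.2.val + 1))) ^ 2 ∂ℙ :=
    fun j₁ _ => integral_finset_sum _ (fun j₂ _ => hint j₁ j₂)
  rw [Finset.sum_congr rfl hswap]
  -- εmax nonneg
  have hεnn : 0 ≤ εmax := le_trans (abs_nonneg _) (hε ⟨⟨0, hn₁⟩, ⟨0, hn₂⟩⟩)
  -- bound each integral
  have hbound : ∀ j₁ ∈ Finset.Icc 1 N₁, ∀ j₂ ∈ Finset.Icc 1 N₂,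
      (∫ ω, (C * ∑ k : Fin n₁ × Fin n₂,
          ε k * W k ω * xi2 j₁ j₂ (gridPt n₁ (k.1.val + 1)) (gridPt n₂ (k.2.val + 1))) ^ 2 ∂ℙ)
      ≤ π ^ 2 * εmax ^ 2 / (n₁ * n₂) := by
    intro j₁ hj₁ j₂ hj₂
    simp only [Finset.mem_Icc] at hj₁ hj₂
    have heq : (∫ ω, (C * ∑ k : Fin n₁ × Fin n₂,
        ε k * W k ω * xi2 j₁ j₂ (gridPt n₁ (k.1.val + 1)) (gridPt n₂ (k.2.val + 1))) ^ 2 ∂ℙ)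
        = ∑ k : Fin n₁ × Fin n₂, (a j₁ j₂ k) ^ 2 := by
      rw [integral_congr_ae (Filter.Eventually.of_forall fun ω => hrw j₁ j₂ ω)]
      exact expectation_sq_sum W hWmeas hWindep hWgauss (a j₁ j₂)
    rw [heq]
    have hterm : ∀ k : Fin n₁ × Fin n₂, (a j₁ j₂ k) ^ 2
        ≤ C ^ 2 * εmax ^ 2 * xi2 j₁ j₂ (gridPt n₁ (k.1.val + 1)) (gridPt n₂ (k.2.val + 1)) ^ 2 := by
      intro k
      have h1 : (ε k) ^ 2 ≤ εmax ^ 2 := by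
        rw [← sq_abs]
        exact pow_le_pow_left₀ (abs_nonneg _) (hε k) 2
      have h2 : (a j₁ j₂ k) ^ 2 = C ^ 2 * (ε k) ^ 2
          * xi2 j₁ j₂ (gridPt n₁ (k.1.val + 1)) (gridPt n₂ (k.2.val + 1)) ^ 2 := by
        rw [ha]; ring
      rw [h2]
      have hξ := sq_nonneg (xi2 j₁ j₂ (gridPt n₁ (k.1.val + 1)) (gridPt n₂ (k.2.val + 1)))
      nlinarith [sq_nonneg C, mul_le_mul_of_nonneg_left h1 (sq_nonneg C)]
    calc ∑ k : Fin n₁ × Fin n₂, (a j₁ j₂ k) ^ 2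
        ≤ ∑ k : Fin n₁ × Fin n₂, C ^ 2 * εmax ^ 2
            * xi2 j₁ j₂ (gridPt n₁ (k.1.val + 1)) (gridPt n₂ (k.2.val + 1)) ^ 2 :=
          Finset.sum_le_sum fun k _ => hterm k
      _ = C ^ 2 * εmax ^ 2 * ∑ k : Fin n₁ × Fin n₂,
            xi2 j₁ j₂ (gridPt n₁ (k.1.val + 1)) (gridPt n₂ (k.2.val + 1)) ^ 2 := by
          rw [← Finset.mul_sum]
      _ = C ^ 2 * εmax ^ 2 * ((n₁ * n₂ : ℝ) / π ^ 2) := by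
          rw [sum_xi2_sq hj₁.1 (lt_of_le_of_lt hj₁.2 hN₁n) hj₂.1 (lt_of_le_of_lt hj₂.2 hN₂n)]
      _ = π ^ 2 * εmax ^ 2 / (n₁ * n₂) := by
          rw [hC]; field_simp
  calc ∑ j₁ ∈ Finset.Icc 1 N₁, ∑ j₂ ∈ Finset.Icc 1 N₂, ∫ ω,
        (C * ∑ k : Fin n₁ × Fin n₂,
            ε k * W k ω * xi2 j₁ j₂ (gridPt n₁ (k.1.val + 1)) (gridPt n₂ (k.2.val + 1))) ^ 2 ∂ℙ
      ≤ ∑ j₁ ∈ Finset.Icc 1 N₁, ∑ j₂ ∈ Finset.Icc 1 N₂, π ^ 2 * εmax ^ 2 / (n₁ * n₂) :=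
        Finset.sum_le_sum fun j₁ hj₁ => Finset.sum_le_sum fun j₂ hj₂ => hbound j₁ hj₁ j₂ hj₂
    _ = (N₁ : ℝ) * ((N₂ : ℝ) * (π ^ 2 * εmax ^ 2 / (n₁ * n₂))) := by
        rw [Finset.sum_const, Finset.sum_const, Nat.card_Icc, Nat.card_Icc]
        simp only [Nat.add_sub_cancel, nsmul_eq_mul, smul_eq_mul]
    _ = π ^ 2 * N₁ * N₂ * εmax ^ 2 / (n₁ * n₂) := by ring
end

section
/- Let 0 < α < 1, T > 0, and M₁, M₂ > 0 with M₁/(1+z) ≤ E_{α,1}(−z) ≤ M₂/(1+z) for all z ≥ 0, and let ϑ > 0. Then for every square-summable family g = (g_j)_{j∈J_d} of reals: (i) for every t ∈ [0,T], ∑_{j∈J_d} ( E_{α,1}(−λ_j t^α) / (ϑ + E_{α,1}(−λ_j T^α)) )² g_j² ≤ (M₂/ϑ)² ∑_{j∈J_d} g_j²; and (ii) for every t ∈ [0,T] and s ∈ (0,T], ∑_{j∈J_d} ( E_{α,1}(−λ_j t^α) E_{α,1}(−λ_j s^α) / (ϑ + E_{α,1}(−λ_j T^α)) )² g_j² ≤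 ( M₂² T^α/(M₁ s^α) )² ∑_{j∈J_d} g_j². -/
lemma lamMulti_nonneg {d : ℕ} (j : Fin d → ℕ+) : 0 ≤ lamMulti j := by
  unfold lamMulti; positivity

lemma aux_tsum {ι : Type*} (r : ι → ℝ) (C : ℝ) (hr : ∀ j, 0 ≤ r j)
    (hrC : ∀ j, r j ≤ C) (g : ι → ℝ) (hg : Summable fun j => (g j) ^ 2) :
    ∑' j, (r j) ^ 2 * (g j) ^ 2 ≤ C ^ 2 * ∑' j, (g j) ^ 2 := by
  have hterm : ∀ j, (r j) ^ 2 * (g j) ^ 2 ≤ C ^ 2 * (g j) ^ 2 := fun j =>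
    mul_le_mul_of_nonneg_right (pow_le_pow_left₀ (hr j) (hrC j) 2) (sq_nonneg _)
  have hs : Summable fun j => C ^ 2 * (g j) ^ 2 := hg.mul_left _
  calc ∑' j, (r j) ^ 2 * (g j) ^ 2
      ≤ ∑' j, C ^ 2 * (g j) ^ 2 := by
        refine Summable.tsum_le_tsum hterm ?_ hs
        exact Summable.of_nonneg_of_le (fun j => by positivity) hterm hs
    _ = C ^ 2 * ∑' j, (g j) ^ 2 := tsum_mul_left

theorem stmt_16 (d : ℕ) (hd : 1 ≤ d) (α T M₁ M₂ ϑ : ℝ)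
    (hα0 : 0 < α) (hα1 : α < 1) (hT : 0 < T) (hM₁ : 0 < M₁) (hM₂ : 0 < M₂) (hϑ : 0 < ϑ)
    (hML : ∀ z : ℝ, 0 ≤ z →
      M₁ / (1 + z) ≤ mittagLeffler α 1 (-z) ∧ mittagLeffler α 1 (-z) ≤ M₂ / (1 + z))
    (g : (Fin d → ℕ+) → ℝ) (hg : Summable fun j => (g j) ^ 2) :
    (∀ t ∈ Set.Icc (0 : ℝ) T,
      ∑' j : Fin d → ℕ+,
          (mittagLeffler α 1 (-(lamMulti j * t ^ α)) /
            (ϑ + mittagLeffler α 1 (-(lamMulti j * T ^ α)))) ^ 2 * (g j) ^ 2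
        ≤ (M₂ / ϑ) ^ 2 * ∑' j : Fin d → ℕ+, (g j) ^ 2) ∧
    (∀ t ∈ Set.Icc (0 : ℝ) T, ∀ s ∈ Set.Ioc (0 : ℝ) T,
      ∑' j : Fin d → ℕ+,
          (mittagLeffler α 1 (-(lamMulti j * t ^ α)) *
            mittagLeffler α 1 (-(lamMulti j * s ^ α)) /
            (ϑ + mittagLeffler α 1 (-(lamMulti j * T ^ α)))) ^ 2 * (g j) ^ 2
        ≤ (M₂ ^ 2 * T ^ α / (M₁ * s ^ α)) ^ 2 * ∑' j : Fin d → ℕ+, (g j) ^ 2) := by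
  -- basic positivity of E values
  have hEpos : ∀ z : ℝ, 0 ≤ z → 0 < mittagLeffler α 1 (-z) := fun z hz => by
    have h := (hML z hz).1
    have : 0 < M₁ / (1 + z) := by positivity
    linarith
  have hEle : ∀ z : ℝ, 0 ≤ z → mittagLeffler α 1 (-z) ≤ M₂ / (1 + z) := fun z hz => (hML z hz).2
  have hEleM₂ : ∀ z : ℝ, 0 ≤ z → mittagLeffler α 1 (-z) ≤ M₂ := fun z hz => by
    refine (hEle z hz).trans ?_
    rw [div_le_iff₀ (by linarith)]
    nlinarith
  have hzT : ∀ j : Fin d → ℕ+, 0 ≤ lamMulti j * T ^ α := fun j =>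
    mul_nonneg (lamMulti_nonneg j) (Real.rpow_nonneg hT.le α)
  constructor
  · intro t ht
    have hzt : ∀ j : Fin d → ℕ+, 0 ≤ lamMulti j * t ^ α := fun j =>
      mul_nonneg (lamMulti_nonneg j) (Real.rpow_nonneg ht.1 α)
    refine aux_tsum _ _ (fun j => ?_) (fun j => ?_) g hg
    · exact div_nonneg (hEpos _ (hzt j)).le (by linarith [hEpos _ (hzT j)])
    · exact div_le_div₀ (by positivity) (hEleM₂ _ (hzt j)) hϑ
        (by linarith [hEpos _ (hzT j)])
  · intro t ht s hs
    have hzt : ∀ j : Fin d → ℕ+, 0 ≤ lamMulti j * t ^ α := fun j =>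
      mul_nonneg (lamMulti_nonneg j) (Real.rpow_nonneg ht.1 α)
    have hzs : ∀ j : Fin d → ℕ+, 0 ≤ lamMulti j * s ^ α := fun j =>
      mul_nonneg (lamMulti_nonneg j) (Real.rpow_nonneg hs.1.le α)
    have hsα : 0 < s ^ α := Real.rpow_pos_of_pos hs.1 α
    have hTα : 0 < T ^ α := Real.rpow_pos_of_pos hT α
    have hsT : s ^ α ≤ T ^ α := Real.rpow_le_rpow hs.1.le hs.2 hα0.le
    refine aux_tsum _ _ (fun j => ?_) (fun j => ?_) g hg
    · exact div_nonneg (mul_nonneg (hEpos _ (hzt j)).le (hEpos _ (hzs j)).le)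
        (by linarith [hEpos _ (hzT j)])
    · set L := lamMulti j with hL
      have hL0 : 0 ≤ L := lamMulti_nonneg j
      have hET : M₁ / (1 + L * T ^ α) ≤ mittagLeffler α 1 (-(L * T ^ α)) := (hML _ (hzT j)).1
      have hEs : mittagLeffler α 1 (-(L * s ^ α)) ≤ M₂ / (1 + L * s ^ α) := hEle _ (hzs j)
      have hEt : mittagLeffler α 1 (-(L * t ^ α)) ≤ M₂ := hEleM₂ _ (hzt j)
      have hETpos : 0 < mittagLeffler α 1 (-(L * T ^ α)) := hEpos _ (hzT j)
      have hEspos : 0 < mittagLeffler α 1 (-(L * s ^ α)) := hEpos _ (hzs j)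
      have hEtpos : 0 < mittagLeffler α 1 (-(L * t ^ α)) := hEpos _ (hzt j)
      have h1s : 0 < 1 + L * s ^ α := by nlinarith
      have h1T : 0 < 1 + L * T ^ α := by nlinarith
      have hnum : mittagLeffler α 1 (-(L * t ^ α)) * mittagLeffler α 1 (-(L * s ^ α))
          ≤ M₂ * (M₂ / (1 + L * s ^ α)) :=
        mul_le_mul hEt hEs hEspos.le hM₂.le
      have hden : M₁ / (1 + L * T ^ α) ≤ ϑ + mittagLeffler α 1 (-(L * T ^ α)) := by
        linarith
      have step1 : mittagLeffler α 1 (-(L * t ^ α)) * mittagLeffler α 1 (-(L * s ^ α)) /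
          (ϑ + mittagLeffler α 1 (-(L * T ^ α)))
          ≤ (M₂ * (M₂ / (1 + L * s ^ α))) / (M₁ / (1 + L * T ^ α)) :=
        div_le_div₀ (by positivity) hnum (by positivity) hden
      have step2 : (M₂ * (M₂ / (1 + L * s ^ α))) / (M₁ / (1 + L * T ^ α))
          = M₂ ^ 2 * (1 + L * T ^ α) / (M₁ * (1 + L * s ^ α)) := by
        field_simp
      have step3 : M₂ ^ 2 * (1 + L * T ^ α) / (M₁ * (1 + L * s ^ α))
          ≤ M₂ ^ 2 * T ^ α / (M₁ * s ^ α) := by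
        rw [div_le_div_iff₀ (by positivity) (by positivity)]
        nlinarith [mul_nonneg (mul_nonneg (sq_nonneg M₂) hM₁.le) (sub_nonneg.2 hsT),
          mul_nonneg (mul_nonneg (mul_nonneg (sq_nonneg M₂) hM₁.le) hL0)
            (mul_nonneg hsα.le hTα.le)]
      calc mittagLeffler α 1 (-(L * t ^ α)) * mittagLeffler α 1 (-(L * s ^ α)) /
          (ϑ + mittagLeffler α 1 (-(L * T ^ α))) ≤ _ := step1
        _ = _ := step2
        _ ≤ _ := step3
end

section
/- Let 0 < α < 1, T > 0, and M₁, M₂ > 0 with M₁/(1+z) ≤ E_{α,1}(−z) ≤ M₂/(1+z) for all z ≥ 0, and let ϑ > 0. Then for every t ∈ [0,T] and every family c = (c_j)_{j∈J_d} of reals with ∑_{j∈J_d} λ_j c_j² < ∞: ∑_{j∈J_d} ( ϑ · E_{α,1}(−λ_j t^α) / (ϑ + E_{α,1}(−λ_j T^α)) )² c_j² ≤ (ϑ M₂² (1+T^α)/(4M₁)) ∑_{j∈J_d} λ_j c_j². -/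
lemma one_le_lamMulti {d : ℕ} (hd : 1 ≤ d) (j : Fin d → ℕ+) : 1 ≤ lamMulti j := by
  have h1 : ∀ i : Fin d, (1 : ℝ) ≤ ((j i : ℕ) : ℝ) ^ 2 := by
    intro i
    have : (1 : ℝ) ≤ ((j i : ℕ) : ℝ) := by exact_mod_cast (j i).one_le
    nlinarith
  have h2 : (Finset.univ : Finset (Fin d)).card • (1 : ℝ) ≤ ∑ i, ((j i : ℕ) : ℝ) ^ 2 :=
    Finset.card_nsmul_le_sum _ _ _ (fun i _ => h1 i)
  simp only [Finset.card_univ, Fintype.card_fin, nsmul_eq_mul, mul_one] at h2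
  have : (1 : ℝ) ≤ (d : ℝ) := by exact_mod_cast hd
  unfold lamMulti
  linarith

set_option maxHeartbeats 1000000 in
theorem stmt_17 (d : ℕ) (hd : 1 ≤ d) (α T M₁ M₂ ϑ : ℝ)
    (hα0 : 0 < α) (hα1 : α < 1) (hT : 0 < T) (hM₁ : 0 < M₁) (hM₂ : 0 < M₂) (hϑ : 0 < ϑ)
    (hML : ∀ z : ℝ, 0 ≤ z →
      M₁ / (1 + z) ≤ mittagLeffler α 1 (-z) ∧ mittagLeffler α 1 (-z) ≤ M₂ / (1 + z))
    (t : ℝ) (ht : t ∈ Set.Icc 0 T)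
    (c : (Fin d → ℕ+) → ℝ) (hc : Summable fun j => lamMulti j * (c j) ^ 2) :
    ∑' j : Fin d → ℕ+,
        (ϑ * mittagLeffler α 1 (-(lamMulti j * t ^ α)) /
          (ϑ + mittagLeffler α 1 (-(lamMulti j * T ^ α)))) ^ 2 * (c j) ^ 2
      ≤ (ϑ * M₂ ^ 2 * (1 + T ^ α) / (4 * M₁)) *
          ∑' j : Fin d → ℕ+, lamMulti j * (c j) ^ 2 := by
  obtain ⟨ht0, htT⟩ := ht
  set C : ℝ := ϑ * M₂ ^ 2 * (1 + T ^ α) / (4 * M₁) with hC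
  clear_value C
  have key : ∀ j : Fin d → ℕ+,
      (ϑ * mittagLeffler α 1 (-(lamMulti j * t ^ α)) /
        (ϑ + mittagLeffler α 1 (-(lamMulti j * T ^ α)))) ^ 2 * (c j) ^ 2
      ≤ C * (lamMulti j * (c j) ^ 2) := by
    intro j
    set lam := lamMulti j with hlam
    clear_value lam
    have hl1 : 1 ≤ lam := hlam ▸ one_le_lamMulti hd j
    have hl0 : 0 ≤ lam := by linarith
    have hta : 0 ≤ t ^ α := Real.rpow_nonneg ht0 α
    have hTa : 0 ≤ T ^ α := Real.rpow_nonneg hT.le α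
    have hzT : 0 ≤ lam * T ^ α := mul_nonneg hl0 hTa
    have hzt : 0 ≤ lam * t ^ α := mul_nonneg hl0 hta
    obtain ⟨hEtL, hEtU⟩ := hML _ hzt
    obtain ⟨hETL, hETU⟩ := hML _ hzT
    set Et := mittagLeffler α 1 (-(lam * t ^ α)) with hEt
    set ET := mittagLeffler α 1 (-(lam * T ^ α)) with hET
    clear_value Et ET
    have hdt : (0:ℝ) < 1 + lam * t ^ α := by linarith
    have hdT : (0:ℝ) < 1 + lam * T ^ α := by linarith
    have hEt0 : 0 < Et := lt_of_lt_of_le (div_pos hM₁ hdt) hEtL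
    have hET0 : 0 < ET := lt_of_lt_of_le (div_pos hM₁ hdT) hETL
    have hEtM : Et ≤ M₂ := by
      calc Et ≤ M₂ / (1 + lam * t ^ α) := hEtU
        _ ≤ M₂ / 1 := by
          apply div_le_div_of_nonneg_left hM₂.le one_pos
          linarith
        _ = M₂ := div_one M₂
    have hETL' : M₁ / (1 + lam * T ^ α) ≤ ET := hETL
    -- termwise inequality
    have hC0 : 0 < C := by rw [hC]; positivity
    have hterm : (ϑ * Et / (ϑ + ET)) ^ 2 ≤ C * lam := by
      have hden : 0 < ϑ + ET := by linarith
      rw [div_pow, div_le_iff₀ (by positivity)]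
      have h4 : 4 * ϑ * (M₁ / (1 + lam * T ^ α)) ≤ (ϑ + ET) ^ 2 := by
        nlinarith [sq_nonneg (ϑ - ET), mul_le_mul_of_nonneg_left hETL' (by linarith : (0:ℝ) ≤ 4 * ϑ)]
      have hnum : (ϑ * Et) ^ 2 ≤ (ϑ * M₂) ^ 2 := by
        have : ϑ * Et ≤ ϑ * M₂ := mul_le_mul_of_nonneg_left hEtM hϑ.le
        nlinarith [mul_pos hϑ hEt0]
      have key0 : (1 + lam * T ^ α) ≤ lam * (1 + T ^ α) := by
        nlinarith [mul_nonneg hTa (sub_nonneg.2 hl1)]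
      have step1 : ϑ ^ 2 * M₂ ^ 2 * (1 + lam * T ^ α) ≤ C * lam * (4 * ϑ * M₁) := by
        rw [hC, div_mul_eq_mul_div, div_mul_eq_mul_div, le_div_iff₀ (by positivity)]
        nlinarith [mul_le_mul_of_nonneg_left key0
          (by positivity : (0:ℝ) ≤ 4 * ϑ ^ 2 * M₂ ^ 2 * M₁)]
      have step2 : (ϑ * Et) ^ 2 ≤ C * lam * (4 * ϑ * (M₁ / (1 + lam * T ^ α))) := by
        have hrw : C * lam * (4 * ϑ * (M₁ / (1 + lam * T ^ α)))
            = C * lam * (4 * ϑ * M₁) / (1 + lam * T ^ α) := by ring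
        rw [hrw, le_div_iff₀ hdT]
        calc (ϑ * Et) ^ 2 * (1 + lam * T ^ α)
            ≤ (ϑ * M₂) ^ 2 * (1 + lam * T ^ α) := mul_le_mul_of_nonneg_right hnum hdT.le
          _ = ϑ ^ 2 * M₂ ^ 2 * (1 + lam * T ^ α) := by ring
          _ ≤ C * lam * (4 * ϑ * M₁) := step1
      calc (ϑ * Et) ^ 2 ≤ C * lam * (4 * ϑ * (M₁ / (1 + lam * T ^ α))) := step2
        _ ≤ C * lam * (ϑ + ET) ^ 2 :=
            mul_le_mul_of_nonneg_left h4 (mul_nonneg hC0.le hl0)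
    calc (ϑ * Et / (ϑ + ET)) ^ 2 * (c j) ^ 2 ≤ (C * lam) * (c j) ^ 2 :=
          mul_le_mul_of_nonneg_right hterm (sq_nonneg _)
      _ = C * (lam * (c j) ^ 2) := by ring
  have hsumg : Summable fun j => C * (lamMulti j * (c j) ^ 2) := hc.mul_left C
  have hsumf : Summable fun j : Fin d → ℕ+ =>
      (ϑ * mittagLeffler α 1 (-(lamMulti j * t ^ α)) /
        (ϑ + mittagLeffler α 1 (-(lamMulti j * T ^ α)))) ^ 2 * (c j) ^ 2 := by
    apply Summable.of_nonneg_of_le (fun j => by positivity) key hsumg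
  calc _ ≤ ∑' j, C * (lamMulti j * (c j) ^ 2) := Summable.tsum_le_tsum key hsumf hsumg
    _ = C * ∑' j, lamMulti j * (c j) ^ 2 := tsum_mul_left
end
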